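/- arXiv:2311.11042 — 4 statements merged into one kernel-verified Lean document; each statement's English description precedes it below -/
import Mathlib

section
/- Let σ ⊂ ℝ^m be an empty non-unimodular lattice d-simplex with vertices v_0, ..., v_d. Then every element of M*(σ) = Int C(σ) ∩ ℤ^{m+1} can be written as z + w with z ∈ M*(σ) of degree at most d − 1 and w ∈ C(σ) ∩ ℤ^{m+1}. (Here decompositions use the full monoid C(σ) ∩ ℤ^{m+1}, not just M(σ).) -/
open Set

noncomputable section

/-- Lift a point of `ℝ^m` to height 1 in `ℝ^(m+1)`. -/
def lift {m : ℕ} (x : Fin m → ℝ) : Fin (m + 1) → ℝ := Fin.snoc x 1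

/-- A point with integer coordinates (a lattice point). -/
def isLat {n : ℕ} (x : Fin n → ℝ) : Prop := ∀ i, ∃ z : ℤ, x i = (z : ℝ)

/-- The cone `C(P)` generated by `P × {1}` (for convex `P`). -/
def coneOf {m : ℕ} (P : Set (Fin m → ℝ)) : Set (Fin (m + 1) → ℝ) :=
  {y | ∃ (c : ℝ) (p : Fin m → ℝ), 0 ≤ c ∧ p ∈ P ∧ y = c • lift p}

/-- The semigroup `M(P)` generated by the lattice points of `P × {1}`. -/
def Msemi {m : ℕ} (P : Set (Fin m → ℝ)) : AddSubmonoid (Fin (m + 1) → ℝ) :=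
  AddSubmonoid.closure {y | ∃ p ∈ P, isLat p ∧ y = lift p}

/-- `M*(P)`: the lattice points in the relative interior of `C(P)`. -/
def Mstar {m : ℕ} (P : Set (Fin m → ℝ)) : Set (Fin (m + 1) → ℝ) :=
  {y | y ∈ intrinsicInterior ℝ (coneOf P) ∧ isLat y}

/-- The degree: the last coordinate. -/
def deg {m : ℕ} (y : Fin (m + 1) → ℝ) : ℝ := y (Fin.last m)

/-- The reduced `P`-degree of `y`. -/
def rdeg {m : ℕ} (P : Set (Fin m → ℝ)) (y : Fin (m + 1) → ℝ) : ℝ :=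
  sInf {r | ∃ z w, z ∈ Mstar P ∧ w ∈ Msemi P ∧ y = z + w ∧ r = deg z}

/-- An empty lattice simplex: its only lattice points are its vertices. -/
def IsEmptyLatticeSimplex {m : ℕ} (s : Set (Fin m → ℝ)) : Prop :=
  ∃ (k : ℕ) (x : Fin (k + 1) → (Fin m → ℝ)), AffineIndependent ℝ x ∧
    (∀ i, isLat (x i)) ∧ s = convexHull ℝ (Set.range x) ∧
    (∀ p ∈ s, isLat p → p ∈ Set.range x)

/-- A lattice triangulation of `P`: a finite face-closed family of empty lattice
simplices covering `P`, with pairwise disjoint relative interiors (every point of `P`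
lies in the relative interior of exactly one simplex), and using every lattice point
of `P` as a vertex. -/
structure IsLatticeTriangulation {m : ℕ} (P : Set (Fin m → ℝ))
    (T : Set (Set (Fin m → ℝ))) : Prop where
  finite : T.Finite
  simplex : ∀ s ∈ T, IsEmptyLatticeSimplex s
  subset : ∀ s ∈ T, s ⊆ P
  partition : ∀ p ∈ P, ∃! s, s ∈ T ∧ p ∈ intrinsicInterior ℝ s
  vertex : ∀ p ∈ P, isLat p → {p} ∈ T

namespace Aux
variable {m d : ℕ}

lemma lift_castSucc (x : Fin m → ℝ) (i : Fin m) : lift x i.castSucc = x i := Fin.snoc_castSucc _ _ _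
lemma lift_last (x : Fin m → ℝ) : lift x (Fin.last m) = 1 := Fin.snoc_last _ _

lemma isLat_lift {x : Fin m → ℝ} (hx : isLat x) : isLat (lift x) := by
  intro j
  induction j using Fin.lastCases with
  | last => exact ⟨1, by simp [lift_last]⟩
  | cast i => obtain ⟨z, hz⟩ := hx i; exact ⟨z, by rwa [lift_castSucc]⟩

lemma isLat_sub {n : ℕ} {x y : Fin n → ℝ} (hx : isLat x) (hy : isLat y) : isLat (x - y) := by
  intro j; obtain ⟨a, ha⟩ := hx j; obtain ⟨b, hb⟩ := hy j
  exact ⟨a - b, by simp [ha, hb]⟩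

lemma isLat_add {n : ℕ} {x y : Fin n → ℝ} (hx : isLat x) (hy : isLat y) : isLat (x + y) := by
  intro j; obtain ⟨a, ha⟩ := hx j; obtain ⟨b, hb⟩ := hy j
  exact ⟨a + b, by simp [ha, hb]⟩

lemma isLat_zsmul_sum {k n : ℕ} (f : Fin k → Fin n → ℝ) (hf : ∀ i, isLat (f i))
    (c : Fin k → ℤ) : isLat (∑ i, (c i : ℝ) • f i) := by
  intro j
  choose z hz using hf
  refine ⟨∑ i, c i * z i j, ?_⟩
  rw [Finset.sum_apply]
  push_cast
  exact Finset.sum_congr rfl fun i _ => by rw [Pi.smul_apply, smul_eq_mul, hz]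

lemma sum_lift_last (v : Fin (d + 1) → Fin m → ℝ) (a : Fin (d + 1) → ℝ) :
    (∑ i, a i • lift (v i)) (Fin.last m) = ∑ i, a i := by
  rw [Finset.sum_apply]
  exact Finset.sum_congr rfl fun i _ => by rw [Pi.smul_apply, smul_eq_mul, lift_last, mul_one]

lemma sum_lift_castSucc (v : Fin (d + 1) → Fin m → ℝ) (a : Fin (d + 1) → ℝ) (j : Fin m) :
    (∑ i, a i • lift (v i)) j.castSucc = ∑ i, a i * v i j := by
  rw [Finset.sum_apply]
  exact Finset.sum_congr rfl fun i _ => by rw [Pi.smul_apply, smul_eq_mul, lift_castSucc]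

lemma sum_coef_sub (v : Fin (d + 1) → Fin m → ℝ) (a b : Fin (d + 1) → ℝ) :
    (∑ i, a i • lift (v i)) - ∑ i, b i • lift (v i) = ∑ i, (a i - b i) • lift (v i) := by
  rw [← Finset.sum_sub_distrib]; simp [sub_smul]

lemma sum_coef_add (v : Fin (d + 1) → Fin m → ℝ) (a b : Fin (d + 1) → ℝ) :
    (∑ i, a i • lift (v i)) + ∑ i, b i • lift (v i) = ∑ i, (a i + b i) • lift (v i) := by
  rw [← Finset.sum_add_distrib]; simp [add_smul]

lemma coeff_unique {v : Fin (d + 1) → Fin m → ℝ} (hv : AffineIndependent ℝ v)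
    {a b : Fin (d + 1) → ℝ} (h : ∑ i, a i • lift (v i) = ∑ i, b i • lift (v i)) : a = b := by
  have hsub : ∑ i, (a i - b i) • lift (v i) = 0 := by
    rw [← sum_coef_sub, h, sub_self]
  have hsum : ∑ i, (a i - b i) = 0 := by
    have := congrFun hsub (Fin.last m)
    rwa [sum_lift_last] at this
  have hvec : ∑ i, (a i - b i) • v i = 0 := by
    funext j
    have := congrFun hsub j.castSucc
    rw [sum_lift_castSucc] at this
    rw [Finset.sum_apply]
    simpa [Pi.smul_apply, smul_eq_mul] using this
  have := affineIndependent_iff.1 hv Finset.univ (fun i => a i - b i) hsum hvec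
  funext i
  have h2 : a i - b i = 0 := this i (Finset.mem_univ i)
  linarith

lemma lift_comb (v : Fin (d + 1) → Fin m → ℝ) (t : Fin (d + 1) → ℝ) (ht : ∑ i, t i = 1) :
    lift (∑ i, t i • v i) = ∑ i, t i • lift (v i) := by
  funext j
  induction j using Fin.lastCases with
  | last => rw [lift_last, sum_lift_last, ht]
  | cast j =>
      rw [lift_castSucc, sum_lift_castSucc, Finset.sum_apply]
      exact Finset.sum_congr rfl fun i _ => by rw [Pi.smul_apply, smul_eq_mul]

lemma linIndep_lift {v : Fin (d + 1) → Fin m → ℝ} (hv : AffineIndependent ℝ v) :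
    LinearIndependent ℝ (fun i => lift (v i)) := by
  rw [Fintype.linearIndependent_iff]
  intro g hg
  have : g = fun _ => (0 : ℝ) := coeff_unique hv (by simpa using hg)
  exact fun i => congrFun this i


lemma mem_coneOf_iff {v : Fin (d + 1) → Fin m → ℝ} {σ : Set (Fin m → ℝ)}
    (hσ : σ = convexHull ℝ (Set.range v)) (x : Fin (m + 1) → ℝ) :
    x ∈ coneOf σ ↔ ∃ α : Fin (d + 1) → ℝ, (∀ i, 0 ≤ α i) ∧ x = ∑ i, α i • lift (v i) := by
  subst hσ
  constructor
  · rintro ⟨c, p, hc, hp, rfl⟩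
    rw [convexHull_range_eq_exists_affineCombination] at hp
    obtain ⟨s, w, hw0, hw1, hwp⟩ := hp
    set w' : Fin (d + 1) → ℝ := fun i => if i ∈ s then w i else 0 with hw'
    have hw'0 : ∀ i, 0 ≤ w' i := by
      intro i; by_cases h : i ∈ s <;> simp [hw', h, hw0 i]
    have hw'1 : ∑ i, w' i = 1 := by
      rw [← hw1]; rw [Finset.sum_ite_mem, Finset.univ_inter]
    have hp' : p = ∑ i, w' i • v i := by
      rw [← hwp, Finset.affineCombination_eq_linear_combination s v w hw1]
      rw [show ∑ i, w' i • v i = ∑ i ∈ s, w' i • v i from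
        (Finset.sum_subset (Finset.subset_univ s) (fun i _ hi => by simp [hw', hi])).symm]
      exact Finset.sum_congr rfl fun i hi => by simp [hw', hi]
    refine ⟨fun i => c * w' i, fun i => mul_nonneg hc (hw'0 i), ?_⟩
    rw [hp', lift_comb v w' hw'1, Finset.smul_sum]
    exact Finset.sum_congr rfl fun i _ => (smul_smul c (w' i) _)
  · rintro ⟨α, hα0, rfl⟩
    set c := ∑ i, α i with hc
    have hc0 : 0 ≤ c := Finset.sum_nonneg fun i _ => hα0 i
    rcases eq_or_lt_of_le hc0 with hc0' | hc0'
    · have hz : ∀ i, α i = 0 := by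
        intro i
        have := (Finset.sum_eq_zero_iff_of_nonneg (fun i _ => hα0 i)).1 hc0'.symm
        exact this i (Finset.mem_univ i)
      refine ⟨0, v 0, le_refl 0, subset_convexHull ℝ _ ⟨0, rfl⟩, ?_⟩
      simp [hz]
    · set t : Fin (d + 1) → ℝ := fun i => α i / c with hti
      have ht1 : ∑ i, t i = 1 := by
        rw [← Finset.sum_div, ← hc, div_self (ne_of_gt hc0')]
      refine ⟨c, ∑ i, t i • v i, hc0, ?_, ?_⟩
      · exact (convex_convexHull ℝ _).sum_mem
          (fun i _ => div_nonneg (hα0 i) hc0) ht1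
          (fun i _ => subset_convexHull ℝ _ ⟨i, rfl⟩)
      · rw [lift_comb v t ht1, Finset.smul_sum]
        exact Finset.sum_congr rfl fun i _ => by
          rw [smul_smul, hti, mul_div_cancel₀ _ (ne_of_gt hc0')]

lemma coneOf_subset_span {v : Fin (d + 1) → Fin m → ℝ} {σ : Set (Fin m → ℝ)}
    (hσ : σ = convexHull ℝ (Set.range v)) :
    coneOf σ ⊆ (Submodule.span ℝ (Set.range fun i => lift (v i)) : Set (Fin (m + 1) → ℝ)) := by
  intro x hx
  obtain ⟨α, -, rfl⟩ := (mem_coneOf_iff hσ x).1 hx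
  exact Submodule.sum_mem _ fun i _ =>
    Submodule.smul_mem _ _ (Submodule.subset_span ⟨i, rfl⟩)

lemma affineSpan_coneOf_eq {v : Fin (d + 1) → Fin m → ℝ} {σ : Set (Fin m → ℝ)}
    (hσ : σ = convexHull ℝ (Set.range v)) :
    (affineSpan ℝ (coneOf σ) : Set (Fin (m + 1) → ℝ))
      = (Submodule.span ℝ (Set.range fun i => lift (v i)) : Set (Fin (m + 1) → ℝ)) := by
  have h0 : (0 : Fin (m + 1) → ℝ) ∈ coneOf σ := by
    rw [mem_coneOf_iff hσ]
    exact ⟨fun _ => 0, fun _ => le_refl 0, by simp⟩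
  apply Set.Subset.antisymm
  · have : affineSpan ℝ (coneOf σ)
        ≤ (Submodule.span ℝ (Set.range fun i => lift (v i))).toAffineSubspace := by
      rw [affineSpan_le]
      exact coneOf_subset_span hσ
    exact this
  · intro x hx
    have h0' : (0 : Fin (m + 1) → ℝ) ∈ affineSpan ℝ (coneOf σ) :=
      subset_affineSpan ℝ _ h0
    have hdir : Submodule.span ℝ (Set.range fun i => lift (v i))
        ≤ (affineSpan ℝ (coneOf σ)).direction := by
      rw [Submodule.span_le]
      rintro - ⟨i, rfl⟩
      have hLi : lift (v i) ∈ coneOf σ := by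
        rw [mem_coneOf_iff hσ]
        refine ⟨fun j => if j = i then 1 else 0, fun j => by positivity, ?_⟩
        simp
      have := AffineSubspace.vsub_mem_direction
        (subset_affineSpan ℝ _ hLi) h0'
      simpa using this
    have := AffineSubspace.vadd_mem_of_mem_direction (hdir hx) h0'
    simpa using this

lemma mem_intrinsicInterior_iff {v : Fin (d + 1) → Fin m → ℝ} {σ : Set (Fin m → ℝ)}
    (hv : AffineIndependent ℝ v) (hσ : σ = convexHull ℝ (Set.range v))
    (α : Fin (d + 1) → ℝ) :
    (∑ i, α i • lift (v i)) ∈ intrinsicInterior ℝ (coneOf σ) ↔ ∀ i, 0 < α i := by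
  classical
  set L : Fin (d + 1) → (Fin (m + 1) → ℝ) := fun i => lift (v i) with hL
  have hLI : LinearIndependent ℝ L := linIndep_lift hv
  set W : Submodule ℝ (Fin (m + 1) → ℝ) := Submodule.span ℝ (Set.range L) with hW
  let B : Module.Basis (Fin (d + 1)) ℝ W := Module.Basis.span hLI
  obtain ⟨W', hW'⟩ := Submodule.exists_isCompl W
  let π := W.linearProjOfIsCompl W' hW'
  let φ : Fin (d + 1) → ((Fin (m + 1) → ℝ) →ₗ[ℝ] ℝ) := fun i => (B.coord i).comp π
  have hφcont : ∀ i, Continuous (φ i) := fun i => (φ i).continuous_of_finiteDimensional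
  have hrepr : ∀ u, ∀ hu : u ∈ W, u = ∑ i, φ i u • L i := by
    intro u hu
    have hπ : π u = ⟨u, hu⟩ := Submodule.linearProjOfIsCompl_apply_left hW' ⟨u, hu⟩
    have hφval : ∀ i, φ i u = B.repr ⟨u, hu⟩ i := by
      intro i
      show B.coord i (π u) = _
      rw [hπ, Module.Basis.coord_apply]
    have hsum : (⟨u, hu⟩ : W) = ∑ i, B.repr ⟨u, hu⟩ i • B i := (B.sum_repr ⟨u, hu⟩).symm
    have := congrArg (Subtype.val : W → (Fin (m + 1) → ℝ)) hsum
    simp only [Submodule.coe_sum, Submodule.coe_smul] at this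
    conv_lhs => rw [this]
    refine Finset.sum_congr rfl fun i _ => ?_
    rw [hφval i, Module.Basis.span_apply]
  have hxW : (∑ i, α i • L i) ∈ W :=
    Submodule.sum_mem _ fun i _ => Submodule.smul_mem _ _ (Submodule.subset_span ⟨i, rfl⟩)
  have hSset : (affineSpan ℝ (coneOf σ) : Set (Fin (m + 1) → ℝ)) = ↑W :=
    affineSpan_coneOf_eq hσ
  constructor
  · rintro ⟨x', hx'int, hval⟩ i
    have hx'c : (x' : Fin (m + 1) → ℝ) = ∑ i, α i • L i := hval
    -- nonnegativity
    have hxcone : (∑ i, α i • L i) ∈ coneOf σ := by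
      have := intrinsicInterior_subset (𝕜 := ℝ) (s := coneOf σ)
      exact this ⟨x', hx'int, hval⟩
    obtain ⟨β, hβ0, hβeq⟩ := (mem_coneOf_iff hσ _).1 hxcone
    have hαβ : β = α := coeff_unique hv hβeq.symm
    have hα0 : ∀ i, 0 ≤ α i := fun i => hαβ ▸ hβ0 i
    by_contra hcon
    have hαi : α i = 0 := le_antisymm (not_lt.1 hcon) (hα0 i)
    obtain ⟨t, htsub, htopen, hxt⟩ := mem_interior.1 hx'int
    obtain ⟨U, hUopen, hUeq⟩ := isOpen_induced_iff.1 htopen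
    have hxU : (x' : Fin (m + 1) → ℝ) ∈ U := by
      rw [← hUeq] at hxt; exact hxt
    have key : ∀ u, u ∈ U → u ∈ W → u ∈ coneOf σ := by
      intro u hu huW
      have huS : u ∈ affineSpan ℝ (coneOf σ) := by
        rw [← SetLike.mem_coe, hSset]; exact huW
      have : (⟨u, huS⟩ : affineSpan ℝ (coneOf σ)) ∈ t := by
        rw [← hUeq]; exact hu
      exact htsub this
    set f : ℝ → (Fin (m + 1) → ℝ) := fun ε => (∑ i, α i • L i) - ε • L i with hf
    have hfc : Continuous f := by
      apply Continuous.sub continuous_const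
      exact (continuous_id.smul continuous_const)
    have hf0 : f 0 = ∑ i, α i • L i := by simp [hf]
    have hev : ∀ᶠ ε in nhds (0 : ℝ), f ε ∈ U := by
      have ht : Filter.Tendsto f (nhds 0) (nhds (∑ i, α i • L i)) := by
        rw [← hf0]; exact hfc.tendsto 0
      exact ht.eventually_mem (hUopen.mem_nhds (hx'c ▸ hxU))
    obtain ⟨ε, hεU, hε⟩ :=
      ((hev.filter_mono nhdsWithin_le_nhds).and
        (eventually_mem_nhdsWithin (s := Set.Ioi (0:ℝ)))).exists
    have hεpos : (0 : ℝ) < ε := hε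
    have hfW : f ε ∈ W := Submodule.sub_mem _ hxW
      (Submodule.smul_mem _ _ (Submodule.subset_span ⟨i, rfl⟩))
    have hfcone : f ε ∈ coneOf σ := key _ hεU hfW
    obtain ⟨γ, hγ0, hγeq⟩ := (mem_coneOf_iff hσ _).1 hfcone
    have hfrep : f ε = ∑ j, (α j - if j = i then ε else 0) • L j := by
      rw [← sum_coef_sub, hf]
      congr 1
      simp [ite_smul]
      rfl
    have hγα : γ = fun j => α j - if j = i then ε else 0 :=
      coeff_unique hv (by rw [← hγeq, hfrep])
    have : 0 ≤ γ i := hγ0 i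
    rw [hγα] at this
    simp [hαi] at this
    linarith
  · intro hpos
    have hxS : (∑ i, α i • L i) ∈ affineSpan ℝ (coneOf σ) := by
      rw [← SetLike.mem_coe, hSset]; exact hxW
    refine ⟨⟨∑ i, α i • L i, hxS⟩, ?_, rfl⟩
    set U : Set (Fin (m + 1) → ℝ) := ⋂ i, (φ i) ⁻¹' (Set.Ioi 0) with hU
    have hUopen : IsOpen U := isOpen_iInter_of_finite fun i => isOpen_Ioi.preimage (hφcont i)
    have hφx : ∀ i, φ i (∑ j, α j • L j) = α i := by
      have h1 := hrepr _ hxW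
      have := coeff_unique hv (a := α) (b := fun i => φ i (∑ j, α j • L j)) h1
      exact fun i => (congrFun this i).symm
    have hxU : (∑ i, α i • L i) ∈ U := by
      rw [hU, Set.mem_iInter]
      intro i
      simp only [Set.mem_preimage, Set.mem_Ioi]
      rw [hφx i]; exact hpos i
    rw [mem_interior]
    refine ⟨Subtype.val ⁻¹' U, ?_, hUopen.preimage continuous_subtype_val, hxU⟩
    rintro ⟨u, huS⟩ hu
    have huW : u ∈ W := by
      rw [← SetLike.mem_coe, hSset] at huS; exact huS
    have huU : u ∈ U := hu
    show u ∈ coneOf σ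
    rw [mem_coneOf_iff hσ]
    refine ⟨fun i => φ i u, fun i => ?_, hrepr u huW⟩
    have := Set.mem_iInter.1 huU i
    exact le_of_lt this



lemma no_boxpoint {v : Fin (d + 1) → Fin m → ℝ} (hv : AffineIndependent ℝ v)
    {σ : Set (Fin m → ℝ)} (hσ : σ = convexHull ℝ (Set.range v))
    (hempty : ∀ p ∈ σ, isLat p → p ∈ Set.range v)
    (γ : Fin (d + 1) → ℝ) (h0 : ∀ i, 0 ≤ γ i) (h1 : ∀ i, γ i < 1)
    (hs : ∑ i, γ i = 1) : ¬ isLat (∑ i, γ i • lift (v i)) := by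
  intro hlat
  set p := ∑ i, γ i • v i with hp
  have hpσ : p ∈ σ := by
    rw [hσ]
    exact (convex_convexHull ℝ _).sum_mem (fun i _ => h0 i) hs
      (fun i _ => subset_convexHull ℝ _ ⟨i, rfl⟩)
  have hliftp : lift p = ∑ i, γ i • lift (v i) := lift_comb v γ hs
  have hplat : isLat p := by
    intro j
    obtain ⟨z, hz⟩ := hlat j.castSucc
    refine ⟨z, ?_⟩
    rw [← lift_castSucc p j, hliftp, hz]
  obtain ⟨j, hj⟩ := hempty p hpσ hplat
  have hlv : lift (v j) = ∑ i, (if i = j then (1:ℝ) else 0) • lift (v i) := by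
    simp
  have : γ = fun i => if i = j then (1:ℝ) else 0 :=
    coeff_unique hv (by rw [← hliftp, ← hj, hlv])
  have := congrFun this j
  simp at this
  exact absurd this (ne_of_lt (h1 j))

lemma keyD {v : Fin (d + 1) → Fin m → ℝ} (hv : AffineIndependent ℝ v)
    (hvlat : ∀ i, isLat (v i))
    {σ : Set (Fin m → ℝ)} (hσ : σ = convexHull ℝ (Set.range v))
    (hempty : ∀ p ∈ σ, isLat p → p ∈ Set.range v)
    (lam γ : Fin (d + 1) → ℝ) (hγ0 : ∀ i, 0 < γ i) (hγ1 : ∀ i, γ i ≤ 1)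
    (j0 : Fin (d + 1)) (hj0 : γ j0 < 1) (hγle : ∀ i, γ i ≤ lam i)
    (hylat : isLat (∑ i, lam i • lift (v i)))
    (hzlat : isLat (∑ i, γ i • lift (v i))) :
    ∃ z w, z ∈ Mstar σ ∧ isLat w ∧ w ∈ coneOf σ ∧
      (∑ i, lam i • lift (v i)) = z + w ∧ deg z ≤ (d : ℝ) - 1 := by
  refine ⟨∑ i, γ i • lift (v i), ∑ i, (lam i - γ i) • lift (v i),
    ⟨(mem_intrinsicInterior_iff hv hσ γ).2 hγ0, hzlat⟩, ?_, ?_, ?_, ?_⟩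
  · rw [← sum_coef_sub]
    exact isLat_sub hylat hzlat
  · rw [mem_coneOf_iff hσ]
    exact ⟨fun i => lam i - γ i, fun i => sub_nonneg.2 (hγle i), rfl⟩
  · rw [sum_coef_add]
    congr 1; funext i; ring
  · obtain ⟨k, hk⟩ := hzlat (Fin.last m)
    rw [sum_lift_last] at hk
    have hdeg : deg (∑ i, γ i • lift (v i)) = (k : ℝ) := by
      rw [deg, sum_lift_last, hk]
    have hones : isLat (∑ i, (1:ℝ) • lift (v i)) := by
      have := isLat_zsmul_sum (fun i => lift (v i)) (fun i => isLat_lift (hvlat i))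
        (fun _ => (1 : ℤ))
      simpa using this
    have hlt : ∑ i, γ i < (d : ℝ) + 1 := by
      have := Finset.sum_lt_sum (f := γ) (g := fun _ => (1:ℝ))
        (fun i _ => hγ1 i) ⟨j0, Finset.mem_univ j0, hj0⟩
      simpa using this
    have hkd : (k : ℝ) < (d : ℝ) + 1 := by rw [← hk]; exact hlt
    have hkle : k ≤ (d : ℤ) := by exact_mod_cast Int.lt_add_one_iff.1 (by exact_mod_cast hkd)
    have hkne : k ≠ (d : ℤ) := by
      intro hkd'
      apply no_boxpoint hv hσ hempty (fun i => 1 - γ i)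
        (fun i => by show (0:ℝ) ≤ 1 - γ i; have := hγ1 i; linarith) (fun i => by show 1 - γ i < 1; have := hγ0 i; linarith) ?_ ?_
      · have : ∑ i, (1 - γ i) = (d + 1 : ℝ) - ∑ i, γ i := by
          rw [Finset.sum_sub_distrib]; simp
        rw [this, hk, hkd']
        push_cast; ring
      · rw [← sum_coef_sub]
        exact isLat_sub hones hzlat
    have : k ≤ (d : ℤ) - 1 := by omega
    rw [hdeg]
    have : (k : ℝ) ≤ (d : ℝ) - 1 := by exact_mod_cast this
    linarith

end Aux

/-- for an empty non-unimodular lattice `d`-simplex, every `y ∈ M*(σ)`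
decomposes as `z + w` with `z ∈ M*(σ)` of degree at most `d - 1` and `w` a lattice
point of the full cone `C(σ)`. -/
theorem stmt11 {m d : ℕ} (σ : Set (Fin m → ℝ)) (v : Fin (d + 1) → (Fin m → ℝ))
    (hv : AffineIndependent ℝ v) (hvlat : ∀ i, isLat (v i))
    (hσ : σ = convexHull ℝ (Set.range v))
    (hempty : ∀ p ∈ σ, isLat p → p ∈ Set.range v)
    (hnu : ∃ y, isLat y ∧ y ∈ coneOf σ ∧
      ∀ a : Fin (d + 1) → ℕ, y ≠ ∑ i, (a i : ℝ) • lift (v i)) :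
    ∀ y ∈ Mstar σ, ∃ z w, z ∈ Mstar σ ∧ isLat w ∧ w ∈ coneOf σ ∧ y = z + w ∧
      deg z ≤ (d : ℝ) - 1 := by
  classical
  intro y hy
  obtain ⟨hyint, hylat⟩ := hy
  obtain ⟨lam, hlam0, hyrep⟩ :=
    (Aux.mem_coneOf_iff hσ y).1 (intrinsicInterior_subset (𝕜 := ℝ) hyint)
  rw [hyrep] at hyint hylat
  have hlampos : ∀ i, 0 < lam i := (Aux.mem_intrinsicInterior_iff hv hσ lam).1 hyint
  have hge1 : ∀ i, Int.fract (lam i) = 0 → 1 ≤ lam i := by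
    intro i hfi
    have hfl : lam i = (⌊lam i⌋ : ℝ) := by
      have := Int.fract_add_floor (lam i)
      rw [hfi] at this
      linarith
    have h1 : (0 : ℝ) < (⌊lam i⌋ : ℝ) := hfl ▸ hlampos i
    have h2 : (1 : ℤ) ≤ ⌊lam i⌋ := by exact_mod_cast h1
    rw [hfl]; exact_mod_cast h2
  rw [hyrep]
  by_cases hall : ∀ i, Int.fract (lam i) = 0
  · -- all coefficients are integers; use the non-unimodularity witness
    obtain ⟨x, hxlat, hxcone, hxne⟩ := hnu
    obtain ⟨a, ha0, hxrep⟩ := (Aux.mem_coneOf_iff hσ x).1 hxcone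
    set β : Fin (d + 1) → ℝ := fun i => Int.fract (a i) with hβ
    have hβ0 : ∀ i, 0 ≤ β i := fun i => Int.fract_nonneg _
    have hβ1 : ∀ i, β i < 1 := fun i => Int.fract_lt_one _
    have hβne : ∃ j, β j ≠ 0 := by
      by_contra hcon
      push_neg at hcon
      apply hxne fun i => (⌊a i⌋).toNat
      rw [hxrep]
      refine Finset.sum_congr rfl fun i _ => ?_
      congr 1
      have hfl0 : (0:ℤ) ≤ ⌊a i⌋ := Int.floor_nonneg.2 (ha0 i)
      have h0 : Int.fract (a i) = 0 := by rw [hβ] at hcon; exact hcon i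
      have h1 := Int.fract_add_floor (a i)
      rw [h0] at h1
      have h2 : a i = ((⌊a i⌋ : ℤ) : ℝ) := by linarith
      conv_lhs => rw [h2]
      exact_mod_cast (Int.toNat_of_nonneg hfl0).symm
    obtain ⟨j0, hj0β⟩ := hβne
    set γ : Fin (d + 1) → ℝ := fun i => if β i = 0 then 1 else β i with hγ
    have hγ0 : ∀ i, 0 < γ i := by
      intro i; rw [hγ]; simp only []
      split
      · exact one_pos
      · exact lt_of_le_of_ne (hβ0 i) (Ne.symm (by assumption))
    have hγ1 : ∀ i, γ i ≤ 1 := by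
      intro i; rw [hγ]; simp only []
      split
      · exact le_refl 1
      · exact le_of_lt (hβ1 i)
    have hγj0 : γ j0 < 1 := by
      rw [hγ]; simp only [hj0β, if_false]
      exact hβ1 j0
    have hγle : ∀ i, γ i ≤ lam i := fun i => le_trans (hγ1 i) (hge1 i (hall i))
    have hzlat : isLat (∑ i, γ i • lift (v i)) := by
      have hrw : ∑ i, γ i • lift (v i) =
          ((∑ i, a i • lift (v i)) - ∑ i, ((⌊a i⌋ : ℤ) : ℝ) • lift (v i)) +
            ∑ i, (((if β i = 0 then (1:ℤ) else 0) : ℤ) : ℝ) • lift (v i) := by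
        rw [Aux.sum_coef_sub, Aux.sum_coef_add]
        refine Finset.sum_congr rfl fun i _ => ?_
        congr 1
        have hfr : β i = a i - (⌊a i⌋ : ℝ) := by
          rw [hβ]; exact (Int.self_sub_floor (a i)).symm
        by_cases h : β i = 0
        · simp only [hγ, if_pos h]
          rw [hfr] at h
          push_cast
          linarith
        · simp only [hγ, if_neg h]
          push_cast
          linarith [hfr]
      rw [hrw]
      refine Aux.isLat_add (Aux.isLat_sub ?_ ?_) ?_
      · rw [← hxrep]; exact hxlat
      · exact Aux.isLat_zsmul_sum _ (fun i => Aux.isLat_lift (hvlat i)) _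
      · exact Aux.isLat_zsmul_sum _ (fun i => Aux.isLat_lift (hvlat i)) _
    exact Aux.keyD hv hvlat hσ hempty lam γ hγ0 hγ1 j0 hγj0 hγle hylat hzlat
  · -- some coefficient is not an integer
    push_neg at hall
    obtain ⟨j0, hj0f⟩ := hall
    set γ : Fin (d + 1) → ℝ := fun i => if Int.fract (lam i) = 0 then 1 else Int.fract (lam i)
      with hγ
    have hγ0 : ∀ i, 0 < γ i := by
      intro i; rw [hγ]; simp only []
      split
      · exact one_pos
      · exact lt_of_le_of_ne (Int.fract_nonneg _) (Ne.symm (by assumption))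
    have hγ1 : ∀ i, γ i ≤ 1 := by
      intro i; rw [hγ]; simp only []
      split
      · exact le_refl 1
      · exact le_of_lt (Int.fract_lt_one _)
    have hγj0 : γ j0 < 1 := by
      rw [hγ]; simp only [hj0f, if_false]
      exact Int.fract_lt_one _
    have hγle : ∀ i, γ i ≤ lam i := by
      intro i; rw [hγ]; simp only []
      split
      · exact hge1 i (by assumption)
      · have hfl0 : (0:ℝ) ≤ (⌊lam i⌋ : ℝ) := by
          exact_mod_cast Int.floor_nonneg.2 (le_of_lt (hlampos i))
        have : Int.fract (lam i) = lam i - (⌊lam i⌋ : ℝ) := rfl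
        linarith
    have hzlat : isLat (∑ i, γ i • lift (v i)) := by
      have hrw : ∑ i, γ i • lift (v i) =
          (∑ i, lam i • lift (v i)) -
            ∑ i, (((if Int.fract (lam i) = 0 then ⌊lam i⌋ - 1 else ⌊lam i⌋) : ℤ) : ℝ) •
              lift (v i) := by
        rw [Aux.sum_coef_sub]
        refine Finset.sum_congr rfl fun i _ => ?_
        congr 1
        have hfr : Int.fract (lam i) = lam i - (⌊lam i⌋ : ℝ) :=
          (Int.self_sub_floor (lam i)).symm
        by_cases h : Int.fract (lam i) = 0
        · simp only [hγ, if_pos h]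
          rw [hfr] at h
          push_cast
          linarith
        · simp only [hγ, if_neg h]
          push_cast
          linarith [hfr]
      rw [hrw]
      exact Aux.isLat_sub hylat
        (Aux.isLat_zsmul_sum _ (fun i => Aux.isLat_lift (hvlat i)) _)
    exact Aux.keyD hv hvlat hσ hempty lam γ hγ0 hγ1 j0 hγj0 hγle hylat hzlat
end
end

section
/- Let σ ⊂ ℝ^d be the simplex with vertices 0, 2e_1, e_2, ..., e_d, where e_i is the i-th standard unit vector. Then every lattice point of Int C(σ) ∩ ℤ^{d+1} can be written as (1,...,1,d) + w for some w ∈ M(σ); i.e., M*(σ) = (1,...,1,d) + M(σ). Consequently rdeg x = d for all x ∈ M*(σ). -/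
open Set

noncomputable section

/-! ### Auxiliary development -/

section Aux
set_option linter.unusedSectionVars false
set_option linter.unusedVariables false
set_option maxHeartbeats 1000000

def Pset (d : ℕ) [NeZero d] : Set (Fin d → ℝ) :=
  {x | (∀ i, 0 ≤ x i) ∧ 2 * (∑ i, x i) ≤ 2 + x 0}

def Qset (d : ℕ) [NeZero d] : Set (Fin (d + 1) → ℝ) :=
  {y | (∀ i : Fin d, 0 ≤ y i.castSucc) ∧
    2 * (∑ i : Fin d, y i.castSucc) ≤ 2 * y (Fin.last d) + y (Fin.castSucc 0)}

set_option linter.unusedSectionVars false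
variable {d : ℕ} [NeZero d]



lemma lift_castSucc (p : Fin d → ℝ) (i : Fin d) : lift p i.castSucc = p i := by
  simp [lift]

lemma lift_last (p : Fin d → ℝ) : lift p (Fin.last d) = 1 := by
  simp [lift]

lemma sum_lift (p : Fin d → ℝ) : (∑ i : Fin d, lift p i.castSucc) = ∑ i, p i := by
  simp [lift]

lemma cone_eq : coneOf (Pset d) = Qset d := by
  ext y
  constructor
  · rintro ⟨c, p, hc, hp, rfl⟩
    refine ⟨fun i => ?_, ?_⟩
    · simp only [Pi.smul_apply, smul_eq_mul, lift_castSucc]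
      exact mul_nonneg hc (hp.1 i)
    · simp only [Pi.smul_apply, smul_eq_mul, lift_castSucc, lift_last, ← Finset.mul_sum]
      have h2 := hp.2
      nlinarith [mul_le_mul_of_nonneg_left h2 hc]
  · rintro ⟨h1, h2⟩
    set t := y (Fin.last d) with ht
    have hy0 : 0 ≤ y (Fin.castSucc 0) := h1 0
    have hsum0 : y (Fin.castSucc 0) ≤ ∑ i : Fin d, y i.castSucc :=
      Finset.single_le_sum (fun i _ => h1 i) (Finset.mem_univ 0)
    have htnn : 0 ≤ t := by nlinarith
    rcases eq_or_lt_of_le htnn with h0 | hpos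
    · -- t = 0 : y = 0
      have hz : ∀ i : Fin d, y i.castSucc = 0 := by
        have hy00 : y (Fin.castSucc 0) = 0 := by nlinarith
        have hs : (∑ i : Fin d, y i.castSucc) = 0 := by nlinarith
        intro i
        have := (Finset.sum_eq_zero_iff_of_nonneg (fun i _ => h1 i)).1 hs i (Finset.mem_univ i)
        exact this
      refine ⟨0, 0, le_refl _, ⟨fun i => le_refl _, by simp⟩, ?_⟩
      funext j
      induction j using Fin.lastCases with
      | last => simpa using h0.symm
      | cast i => simpa using hz i
    · refine ⟨t, fun i => t⁻¹ * y i.castSucc, le_of_lt hpos, ⟨fun i => ?_, ?_⟩, ?_⟩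
      · exact mul_nonneg (inv_nonneg.2 htnn) (h1 i)
      · rw [← Finset.mul_sum]
        show 2 * (t⁻¹ * ∑ i : Fin d, y i.castSucc) ≤ 2 + t⁻¹ * y (Fin.castSucc 0)
        have hk := mul_le_mul_of_nonneg_left h2 (inv_nonneg.2 htnn)
        have hinv : t⁻¹ * t = 1 := inv_mul_cancel₀ (ne_of_gt hpos)
        nlinarith
      · funext j
        induction j using Fin.lastCases with
        | last => simp [lift_last]; exact ht.symm
        | cast i =>
            simp only [Pi.smul_apply, smul_eq_mul, lift_castSucc]
            rw [← mul_assoc, mul_inv_cancel₀ (ne_of_gt hpos), one_mul]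

lemma Qset_add {y z : Fin (d+1) → ℝ} (hy : y ∈ Qset d) (hz : z ∈ Qset d) :
    y + z ∈ Qset d := by
  refine ⟨fun i => add_nonneg (hy.1 i) (hz.1 i), ?_⟩
  simp only [Pi.add_apply, Finset.sum_add_distrib]
  have := hy.2; have := hz.2; linarith

lemma Qset_zero : (0 : Fin (d+1) → ℝ) ∈ Qset d := by
  refine ⟨fun i => le_refl _, by simp⟩

lemma isLat_add {n : ℕ} {x y : Fin n → ℝ} (hx : isLat x) (hy : isLat y) : isLat (x + y) := by
  intro i
  obtain ⟨a, ha⟩ := hx i; obtain ⟨b, hb⟩ := hy i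
  exact ⟨a + b, by push_cast; simp [ha, hb]⟩

lemma isLat_zero {n : ℕ} : isLat (0 : Fin n → ℝ) := fun i => ⟨0, by simp⟩

lemma isLat_lift {p : Fin d → ℝ} (hp : isLat p) : isLat (lift p) := by
  intro j
  induction j using Fin.lastCases with
  | last => exact ⟨1, by simp [lift_last]⟩
  | cast i => obtain ⟨a, ha⟩ := hp i; exact ⟨a, by simp [lift_castSucc, ha]⟩

/-- `Msemi (Pset d)` is contained in the lattice points of `Qset d`. -/
lemma Msemi_subset {y : Fin (d+1) → ℝ} (hy : y ∈ Msemi (Pset d)) :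
    y ∈ Qset d ∧ isLat y := by
  let L : AddSubmonoid (Fin (d+1) → ℝ) :=
    { carrier := {y | y ∈ Qset d ∧ isLat y}
      add_mem' := fun ha hb => ⟨Qset_add ha.1 hb.1, isLat_add ha.2 hb.2⟩
      zero_mem' := ⟨Qset_zero, isLat_zero⟩ }
  have : Msemi (Pset d) ≤ L := by
    apply AddSubmonoid.closure_le.2
    rintro x ⟨p, hp, hplat, rfl⟩
    constructor
    · rw [← cone_eq]
      exact ⟨1, p, zero_le_one, hp, by simp⟩
    · exact isLat_lift hplat
  exact this hy

lemma deg_nonneg {y : Fin (d+1) → ℝ} (hy : y ∈ Qset d) : 0 ≤ y (Fin.last d) := by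
  have h1 := hy.1
  have hy0 : 0 ≤ y (Fin.castSucc 0) := h1 0
  have hsum0 : y (Fin.castSucc 0) ≤ ∑ i : Fin d, y i.castSucc :=
    Finset.single_le_sum (fun i _ => h1 i) (Finset.mem_univ 0)
  nlinarith [hy.2]


def vtx (d : ℕ) : Fin (d + 1) → Fin d → ℝ := fun k => fun i =>
  if (k : ℕ) = 0 then (0 : ℝ)
  else if (k : ℕ) = 1 ∧ (i : ℕ) = 0 then 2
  else if (i : ℕ) + 1 = (k : ℕ) then 1 else 0

lemma vtx_nonneg (k : Fin (d+1)) (i : Fin d) : 0 ≤ vtx d k i := by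
  unfold vtx; split_ifs <;> norm_num

lemma vtx_mem (k : Fin (d+1)) : vtx d k ∈ Pset d := by
  refine ⟨vtx_nonneg k, ?_⟩
  rcases Nat.lt_or_ge (k : ℕ) 2 with hk | hk
  · rcases Nat.lt_or_ge (k : ℕ) 1 with hk0 | hk1
    · -- k = 0
      have h0 : (k : ℕ) = 0 := by omega
      have : ∀ i, vtx d k i = 0 := by intro i; simp [vtx, h0]
      simp [this, Finset.sum_const_zero]
    · -- k = 1
      have h1 : (k : ℕ) = 1 := by omega
      have hv : ∀ i : Fin d, vtx d k i = if i = 0 then 2 else 0 := by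
        intro i
        simp only [vtx, h1]
        rcases eq_or_ne i 0 with rfl | hi
        · simp
        · have h3 : (i : ℕ) ≠ 0 := by
            exact Fin.val_ne_zero_iff.mpr hi
          have h4 : ¬((i : ℕ) + 1 = 1) := by omega
          simp [h3, h4, hi]
      have hs : (∑ i, vtx d k i) = 2 := by
        simp only [hv]
        rw [Finset.sum_ite_eq' Finset.univ (0 : Fin d) (fun _ => (2:ℝ))]
        simp
      rw [hs, hv 0]
      norm_num
  · -- k ≥ 2
    have hk0 : (k : ℕ) ≠ 0 := by omega
    have hk1 : (k : ℕ) ≠ 1 := by omega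
    have hklt : (k : ℕ) - 1 < d := by have := k.isLt; omega
    set j : Fin d := ⟨(k : ℕ) - 1, hklt⟩ with hj
    have hv : ∀ i : Fin d, vtx d k i = if i = j then 1 else 0 := by
      intro i
      simp only [vtx, hk0, if_false, hk1, false_and, if_false]
      have : ((i : ℕ) + 1 = (k : ℕ)) ↔ i = j := by
        rw [Fin.ext_iff]; simp [hj]; omega
      simp only [this]
    have hs : (∑ i, vtx d k i) = 1 := by
      simp only [hv]
      rw [Finset.sum_ite_eq' Finset.univ j (fun _ => (1:ℝ))]
      simp
    have h0 : vtx d k 0 = 0 := by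
      rw [hv 0]
      have : (0 : Fin d) ≠ j := by
        simp [Fin.ext_iff, hj]; omega
      simp [this]
    rw [hs, h0]; norm_num

lemma convex_Pset : Convex ℝ (Pset d) := by
  intro x hx y hy a b ha hb hab
  refine ⟨fun i => ?_, ?_⟩
  · simp only [Pi.add_apply, Pi.smul_apply, smul_eq_mul]
    have := hx.1 i; have := hy.1 i
    nlinarith
  · simp only [Pi.add_apply, Pi.smul_apply, smul_eq_mul, Finset.sum_add_distrib, ← Finset.mul_sum]
    have h1 := mul_le_mul_of_nonneg_left hx.2 ha
    have h2 := mul_le_mul_of_nonneg_left hy.2 hb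
    nlinarith

lemma hull_eq : convexHull ℝ (Set.range (vtx d)) = Pset d := by
  apply le_antisymm
  · apply convexHull_min _ convex_Pset
    rintro _ ⟨k, rfl⟩
    exact vtx_mem k
  · intro x hx
    have hd1 : 1 ≤ d := Nat.one_le_iff_ne_zero.2 (NeZero.ne d)
    set c : Fin (d + 1) → ℝ := fun k =>
      if (k : ℕ) = 0 then 1 + x 0 / 2 - ∑ i, x i
      else if (k : ℕ) = 1 then x 0 / 2
      else x ⟨(k : ℕ) - 1, by have := k.isLt; omega⟩ with hc
    have hcsucc : ∀ k : Fin d, c k.succ = if k = 0 then x 0 / 2 else x k := by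
      intro k
      have h1 : ((k.succ : Fin (d+1)) : ℕ) = (k : ℕ) + 1 := Fin.val_succ k
      simp only [hc, h1]
      have : ((k : ℕ) + 1 ≠ 0) := by omega
      rw [if_neg this]
      rcases eq_or_ne k 0 with rfl | hk
      · simp
      · have hk' : (k : ℕ) ≠ 0 := Fin.val_ne_zero_iff.mpr hk
        rw [if_neg (by omega), if_neg hk]
        congr 1
    have hsum2 : (∑ k : Fin d, c k.succ) = x 0 / 2 + ((∑ i, x i) - x 0) := by
      have : ∀ k : Fin d, c k.succ = Function.update x 0 (x 0 / 2) k := by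
        intro k; rw [hcsucc k, Function.update_apply]
      rw [Finset.sum_congr rfl (fun k _ => this k)]
      rw [Finset.sum_update_of_mem (Finset.mem_univ 0)]
      congr 1
      rw [Finset.sdiff_singleton_eq_erase, ← Finset.sum_erase_add Finset.univ x (Finset.mem_univ 0)]
      ring
    have hsum : (∑ k, c k) = 1 := by
      rw [Fin.sum_univ_succ, hsum2]
      have hc0 : c 0 = 1 + x 0 / 2 - ∑ i, x i := by simp [hc]
      rw [hc0]; ring
    have hcnn : ∀ k, 0 ≤ c k := by
      intro k
      simp only [hc]
      split_ifs with h1 h2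
      · have := hx.2; linarith
      · have := hx.1 0; linarith
      · exact hx.1 _
    have hcm : Finset.univ.centerMass c (vtx d) = x := by
      rw [Finset.centerMass_eq_of_sum_1 _ _ hsum]
      funext i
      rw [Finset.sum_apply]
      have hterm : ∀ k : Fin d, (c k.succ • vtx d k.succ) i = if k = i then x i else 0 := by
        intro k
        have h1 : ((k.succ : Fin (d+1)) : ℕ) = (k : ℕ) + 1 := Fin.val_succ k
        simp only [Pi.smul_apply, smul_eq_mul, vtx, h1, hcsucc k]
        rcases eq_or_ne k 0 with rfl | hk
        · rcases eq_or_ne i 0 with rfl | hi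
          · norm_num
          · have hi' : (i : ℕ) ≠ 0 := Fin.val_ne_zero_iff.mpr hi
            have : ¬ ((i : ℕ) + 1 = (0:Fin d).val + 1) := by
              simp; omega
            simp [hi', this, Ne.symm hi]
        · have hk' : (k : ℕ) ≠ 0 := Fin.val_ne_zero_iff.mpr hk
          rw [if_neg hk]
          have hcond : ¬((k : ℕ) + 1 = 0) := by omega
          rw [if_neg (by omega : ¬((k:ℕ) + 1 = 0)), if_neg (by simp; omega)]
          have heq : ((i : ℕ) + 1 = (k : ℕ) + 1) ↔ k = i := by
            rw [Fin.ext_iff]; omega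
          rcases eq_or_ne k i with rfl | hki
          · simp [heq]
          · rw [if_neg (by rw [heq]; exact hki), if_neg hki, mul_zero]
      rw [Fin.sum_univ_succ]
      have h00 : (c 0 • vtx d 0) i = 0 := by
        simp [vtx]
      rw [h00, zero_add, Finset.sum_congr rfl (fun k _ => hterm k)]
      rw [Finset.sum_ite_eq' Finset.univ i (fun _ => x i)]
      simp
    rw [← hcm]
    exact Finset.centerMass_mem_convexHull _ (fun k _ => hcnn k) (by rw [hsum]; norm_num)
      (fun k _ => Set.mem_range_self k)

lemma isLat_sub {n : ℕ} {x y : Fin n → ℝ} (hx : isLat x) (hy : isLat y) : isLat (x - y) := by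
  intro i
  obtain ⟨a, ha⟩ := hx i; obtain ⟨b, hb⟩ := hy i
  exact ⟨a - b, by push_cast; simp [ha, hb]⟩



def ept (d : ℕ) [NeZero d] (j : Fin d) : Fin d → ℝ := fun i => if i = j then 1 else 0
def e2 (d : ℕ) [NeZero d] : Fin d → ℝ := fun i => if i = 0 then 2 else 0

lemma sum_ept (j : Fin d) : (∑ i, ept d j i) = 1 := by
  unfold ept
  rw [Finset.sum_ite_eq' Finset.univ j (fun _ => (1:ℝ))]; simp

lemma ept_mem (j : Fin d) : ept d j ∈ Pset d := by
  refine ⟨fun i => by unfold ept; split_ifs <;> norm_num, ?_⟩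
  rw [sum_ept]
  unfold ept; split_ifs <;> norm_num

lemma ept_lat (j : Fin d) : isLat (ept d j) := fun i => by
  unfold ept; split_ifs
  · exact ⟨1, by norm_num⟩
  · exact ⟨0, by norm_num⟩

lemma sum_e2 : (∑ i, e2 d i) = 2 := by
  unfold e2
  rw [Finset.sum_ite_eq' Finset.univ (0 : Fin d) (fun _ => (2:ℝ))]; simp

lemma e2_mem : e2 d ∈ Pset d := by
  refine ⟨fun i => by unfold e2; split_ifs <;> norm_num, ?_⟩
  rw [sum_e2]; unfold e2; norm_num

lemma e2_lat : isLat (e2 d) := fun i => by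
  unfold e2; split_ifs
  · exact ⟨2, by norm_num⟩
  · exact ⟨0, by norm_num⟩

lemma zero_memP : (0 : Fin d → ℝ) ∈ Pset d := ⟨fun i => le_refl _, by simp⟩
lemma zero_lat : isLat (0 : Fin d → ℝ) := fun i => ⟨0, by simp⟩

lemma step_mem {p : Fin d → ℝ} (hp : p ∈ Pset d) (hl : isLat p)
    {y : Fin (d+1) → ℝ} (h : y - lift p ∈ Msemi (Pset d)) :
    y ∈ Msemi (Pset d) := by
  have hy : y = lift p + (y - lift p) := by abel
  rw [hy]
  exact AddSubmonoid.add_mem _ (AddSubmonoid.subset_closure ⟨p, hp, hl, rfl⟩) h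

lemma latQ_mem (hd : 1 ≤ d) : ∀ y, y ∈ Qset d → isLat y → y ∈ Msemi (Pset d) := by
  have key : ∀ n : ℕ, ∀ y, y ∈ Qset d → isLat y → y (Fin.last d) = n → y ∈ Msemi (Pset d) := by
    intro n
    induction n with
    | zero =>
      intro y hy hl h0
      have h1 := hy.1
      have hy0 : 0 ≤ y (Fin.castSucc 0) := h1 0
      have hsum0 : y (Fin.castSucc 0) ≤ ∑ i : Fin d, y i.castSucc :=
        Finset.single_le_sum (fun i _ => h1 i) (Finset.mem_univ 0)
      have h2 := hy.2
      rw [h0] at h2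
      push_cast at h2
      have hy00 : y (Fin.castSucc 0) = 0 := by nlinarith
      have hs : (∑ i : Fin d, y i.castSucc) = 0 := by nlinarith
      have hz : ∀ i : Fin d, y i.castSucc = 0 :=
        fun i => (Finset.sum_eq_zero_iff_of_nonneg (fun i _ => h1 i)).1 hs i (Finset.mem_univ i)
      have hy0' : y = 0 := by
        funext j
        induction j using Fin.lastCases with
        | last => simpa using h0
        | cast i => simpa using hz i
      rw [hy0']
      exact (Msemi (Pset d)).zero_mem
    | succ n ih =>
      intro y hy hl hn
      choose z hz using hl
      have hznn : ∀ i : Fin d, 0 ≤ z i.castSucc := by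
        intro i
        have := hy.1 i; rw [hz] at this; exact_mod_cast this
      have hlift_sub : ∀ p : Fin d → ℝ, ∀ i : Fin d,
          (y - lift p) i.castSucc = y i.castSucc - p i := by
        intro p i; simp [lift_castSucc]
      have hlast_sub : ∀ p : Fin d → ℝ, (y - lift p) (Fin.last d) = y (Fin.last d) - 1 := by
        intro p; simp [lift_last]
      by_cases hA : ∃ i : Fin d, i ≠ 0 ∧ 1 ≤ z i.castSucc
      · obtain ⟨i, hi0, hi1⟩ := hA
        apply step_mem (ept_mem i) (ept_lat i)
        apply ih
        · refine ⟨fun j => ?_, ?_⟩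
          · rw [hlift_sub]
            unfold ept
            rcases eq_or_ne j i with rfl | hj
            · have : (1:ℝ) ≤ y j.castSucc := by rw [hz]; exact_mod_cast hi1
              rw [if_pos rfl]; linarith
            · have := hy.1 j; rw [if_neg hj]; linarith
          · rw [hlast_sub]
            simp only [hlift_sub]
            rw [Finset.sum_sub_distrib, sum_ept]
            have h0i : (0 : Fin d) ≠ i := Ne.symm hi0
            have : ept d i 0 = 0 := by unfold ept; simp [h0i]
            rw [this]
            have := hy.2; linarith
        · exact isLat_sub (fun j => ⟨z j, hz j⟩) (isLat_lift (ept_lat i))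
        · rw [hlast_sub, hn]; push_cast; ring
      · by_cases hB : 2 ≤ z (Fin.castSucc 0)
        · apply step_mem (e2_mem) (e2_lat)
          apply ih
          · refine ⟨fun j => ?_, ?_⟩
            · rw [hlift_sub]
              unfold e2
              rcases eq_or_ne j 0 with rfl | hj
              · have : (2:ℝ) ≤ y (Fin.castSucc 0) := by rw [hz]; exact_mod_cast hB
                rw [if_pos rfl]; linarith
              · have := hy.1 j; rw [if_neg hj]; linarith
            · rw [hlast_sub]
              simp only [hlift_sub]
              rw [Finset.sum_sub_distrib, sum_e2]
              have : e2 d 0 = 2 := by unfold e2; simp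
              rw [this]
              have := hy.2; linarith
          · exact isLat_sub (fun j => ⟨z j, hz j⟩) (isLat_lift e2_lat)
          · rw [hlast_sub, hn]; push_cast; ring
        · push_neg at hA hB
          have hzero : ∀ i : Fin d, i ≠ 0 → z i.castSucc = 0 := by
            intro i hi
            have h1 := hA i hi
            have h2 := hznn i
            omega
          by_cases hC : z (Fin.castSucc 0) = 1
          · apply step_mem (ept_mem 0) (ept_lat 0)
            apply ih
            · have hsum : (∑ i : Fin d, y i.castSucc) = 1 := by
                rw [Finset.sum_eq_single_of_mem (0 : Fin d) (Finset.mem_univ 0)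
                  (fun i _ hi => by rw [hz, hzero i hi]; norm_num)]
                rw [hz, hC]; norm_num
              refine ⟨fun j => ?_, ?_⟩
              · rw [hlift_sub]
                unfold ept
                rcases eq_or_ne j 0 with rfl | hj
                · have : (1:ℝ) ≤ y (Fin.castSucc 0) := by rw [hz, hC]; norm_num
                  rw [if_pos rfl]; linarith
                · have := hy.1 j; rw [if_neg hj]; linarith
              · rw [hlast_sub]
                simp only [hlift_sub]
                rw [Finset.sum_sub_distrib, sum_ept, hsum]
                have : ept d 0 0 = 1 := by unfold ept; simp
                rw [this]
                have hyc : y (Fin.castSucc 0) = 1 := by rw [hz, hC]; norm_num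
                rw [hyc, hn]
                push_cast
                linarith
            · exact isLat_sub (fun j => ⟨z j, hz j⟩) (isLat_lift (ept_lat 0))
            · rw [hlast_sub, hn]; push_cast; ring
          · -- all coordinates are zero
            have hz0 : z (Fin.castSucc 0) = 0 := by
              have h1 := hB
              have h2 := hznn 0
              omega
            have hall : ∀ i : Fin d, y i.castSucc = 0 := by
              intro i
              rcases eq_or_ne i 0 with rfl | hi
              · rw [hz, hz0]; norm_num
              · rw [hz, hzero i hi]; norm_num
            apply step_mem zero_memP zero_lat
            apply ih
            · refine ⟨fun j => ?_, ?_⟩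
              · rw [hlift_sub]; rw [hall j]; norm_num
              · rw [hlast_sub]
                simp only [hlift_sub]
                have : (∑ i : Fin d, (y i.castSucc - (0:Fin d → ℝ) i)) = 0 := by
                  rw [Finset.sum_sub_distrib]
                  simp [hall]
                rw [this, hall 0, hn]
                simp only [Pi.zero_apply]
                push_cast
                nlinarith [n.cast_nonneg (α := ℝ)]
            · exact isLat_sub (fun j => ⟨z j, hz j⟩) (isLat_lift zero_lat)
            · rw [hlast_sub, hn]; push_cast; ring
  intro y hyQ hyl
  obtain ⟨t, ht⟩ := hyl (Fin.last d)
  have htnn : 0 ≤ t := by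
    have h1 := hyQ.1
    have hy0 : 0 ≤ y (Fin.castSucc 0) := h1 0
    have hsum0 : y (Fin.castSucc 0) ≤ ∑ i : Fin d, y i.castSucc :=
      Finset.single_le_sum (fun i _ => h1 i) (Finset.mem_univ 0)
    have h2 := hyQ.2
    rw [ht] at h2
    have : (0:ℝ) ≤ (t:ℝ) := by nlinarith
    exact_mod_cast this
  exact key t.toNat y hyQ hyl (by rw [ht]; norm_cast; omega)

def Uset (d : ℕ) [NeZero d] : Set (Fin (d + 1) → ℝ) :=
  {y | (∀ i : Fin d, 0 < y i.castSucc) ∧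
    2 * (∑ i : Fin d, y i.castSucc) < 2 * y (Fin.last d) + y (Fin.castSucc 0)}

variable {d : ℕ} [NeZero d]

lemma isOpen_U : IsOpen (Uset d) := by
  have h1 : Uset d = (⋂ i : Fin d, {y : Fin (d+1) → ℝ | 0 < y i.castSucc}) ∩
      {y : Fin (d+1) → ℝ |
        2 * (∑ i : Fin d, y i.castSucc) < 2 * y (Fin.last d) + y (Fin.castSucc 0)} := by
    ext y
    simp only [Uset, Set.mem_inter_iff, Set.mem_iInter, Set.mem_setOf_eq]
  rw [h1]
  refine IsOpen.inter (isOpen_iInter_of_finite fun i => ?_) ?_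
  · exact isOpen_lt continuous_const (continuous_apply _)
  · exact isOpen_lt
      (continuous_const.mul (continuous_finset_sum _ fun i _ => continuous_apply _))
      ((continuous_const.mul (continuous_apply _)).add (continuous_apply _))

lemma U_subset_interior : Uset d ⊆ interior (Qset d) :=
  interior_maximal (fun y hy => ⟨fun i => (hy.1 i).le, hy.2.le⟩) isOpen_U

lemma interior_subset_U : interior (Qset d) ⊆ Uset d := by
  intro y hy
  rw [mem_interior_iff_mem_nhds, Metric.mem_nhds_iff] at hy
  obtain ⟨ε, hε, hball⟩ := hy
  have hpert : ∀ j : Fin (d+1), Function.update y j (y j - ε/2) ∈ Qset d := by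
    intro j
    apply hball
    rw [Metric.mem_ball, dist_pi_lt_iff hε]
    intro b
    rcases eq_or_ne b j with rfl | hb
    · rw [Function.update_self, Real.dist_eq]
      rw [show y b - ε / 2 - y b = -(ε/2) by ring, abs_neg, abs_of_nonneg (by linarith)]
      linarith
    · rw [Function.update_of_ne hb]
      simpa using hε
  constructor
  · intro i
    have h := (hpert i.castSucc).1 i
    rw [Function.update_self] at h
    linarith
  · have h := (hpert (Fin.last d)).2
    have hne : ∀ i : Fin d, i.castSucc ≠ Fin.last d := fun i => (Fin.castSucc_lt_last i).ne
    rw [Function.update_self, Function.update_of_ne (hne 0)] at h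
    have hs : (∑ i : Fin d, Function.update y (Fin.last d) (y (Fin.last d) - ε/2) i.castSucc)
        = ∑ i : Fin d, y i.castSucc :=
      Finset.sum_congr rfl fun i _ => by rw [Function.update_of_ne (hne i)]
    rw [hs] at h
    linarith

lemma intrinsic_sub_interior {E : Type*} [NormedAddCommGroup E] [NormedSpace ℝ E]
    {s : Set E} (h : affineSpan ℝ s = ⊤) : intrinsicInterior ℝ s ⊆ interior s := by
  intro x hx
  obtain ⟨y, hy, rfl⟩ := mem_intrinsicInterior.1 hx
  rw [mem_interior_iff_mem_nhds] at hy ⊢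
  rw [mem_nhds_subtype] at hy
  obtain ⟨t, ht, hts⟩ := hy
  refine Filter.mem_of_superset ht fun v hv => ?_
  exact hts (show (⟨v, by rw [h]; exact AffineSubspace.mem_top ℝ E v⟩ :
    affineSpan ℝ s) ∈ Subtype.val ⁻¹' t from hv)

lemma span_top : affineSpan ℝ (Qset d) = ⊤ := by
  apply affineSpan_eq_top_of_nonempty_interior
  have hne : ∀ i : Fin d, i.castSucc ≠ Fin.last d := fun i => (Fin.castSucc_lt_last i).ne
  have hmem : (fun j => if j = Fin.last d then (d + 1 : ℝ) else 1) ∈ Uset d := by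
    constructor
    · intro i
      simp only [if_neg (hne i)]
      norm_num
    · have hs : (∑ i : Fin d, (if (i.castSucc : Fin (d+1)) = Fin.last d then (d + 1 : ℝ) else 1))
          = d := by
        rw [Finset.sum_congr rfl fun i _ => if_neg (hne i)]
        simp
      simp only [hs, if_neg (hne 0)]
      simp only [if_true]
      linarith
  exact ⟨_, interior_mono (subset_convexHull ℝ _) (U_subset_interior hmem)⟩


def vf (d : ℕ) : Fin (d + 1) → ℝ := fun k => if (k : ℕ) = d then (d : ℝ) else 1

lemma vf_cs (i : Fin d) : vf d i.castSucc = 1 := by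
  unfold vf
  have h : ((i.castSucc : Fin (d+1)) : ℕ) = (i : ℕ) := Fin.coe_castSucc i
  rw [h, if_neg (ne_of_lt i.isLt)]

lemma vf_last : vf d (Fin.last d) = d := by
  unfold vf
  rw [if_pos (Fin.val_last d)]

lemma vf_lat : isLat (vf d) := fun j => by
  unfold vf; split_ifs
  · exact ⟨d, by norm_num⟩
  · exact ⟨1, by norm_num⟩

lemma sum_vf : (∑ i : Fin d, vf d i.castSucc) = d := by
  rw [Finset.sum_congr rfl fun i _ => vf_cs i]
  simp

lemma mstar_iff (y : Fin (d+1) → ℝ) :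
    y ∈ Mstar (Pset d) ↔ ∃ w ∈ Msemi (Pset d), y = vf d + w := by
  have hd : 1 ≤ d := Nat.one_le_iff_ne_zero.2 (NeZero.ne d)
  constructor
  · rintro ⟨hint, hlat⟩
    rw [cone_eq] at hint
    have hyU : y ∈ Uset d := interior_subset_U (intrinsic_sub_interior span_top hint)
    have hlat' : ∀ j, ∃ n : ℤ, y j = (n : ℝ) := hlat
    choose z hz using hlat'
    have h1z : ∀ i : Fin d, 1 ≤ z i.castSucc := by
      intro i
      have h := hyU.1 i
      rw [hz] at h
      have : (0:ℤ) < z i.castSucc := by exact_mod_cast h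
      omega
    have h1 : ∀ i : Fin d, (1:ℝ) ≤ y i.castSucc := by
      intro i; rw [hz]; exact_mod_cast h1z i
    have hsumz : (∑ i : Fin d, y i.castSucc) = ((∑ i : Fin d, z i.castSucc : ℤ) : ℝ) := by
      push_cast
      exact Finset.sum_congr rfl fun i _ => hz _
    have h2z : 2 * (∑ i : Fin d, z i.castSucc) + 1 ≤ 2 * z (Fin.last d) + z (Fin.castSucc 0) := by
      have h := hyU.2
      rw [hsumz, hz (Fin.last d), hz (Fin.castSucc 0)] at h
      have h' : 2 * (∑ i : Fin d, z i.castSucc) < 2 * z (Fin.last d) + z (Fin.castSucc 0) := by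
        exact_mod_cast h
      omega
    have h2r : 2 * (∑ i : Fin d, y i.castSucc) + 1 ≤ 2 * y (Fin.last d) + y (Fin.castSucc 0) := by
      rw [hsumz, hz (Fin.last d), hz (Fin.castSucc 0)]
      exact_mod_cast h2z
    set w := y - vf d with hwdef
    have hcs : ∀ i : Fin d, w i.castSucc = y i.castSucc - 1 := by
      intro i; rw [hwdef]; simp [vf_cs]
    have hlastw : w (Fin.last d) = y (Fin.last d) - d := by
      rw [hwdef]; simp [vf_last]
    have hwQ : w ∈ Qset d := by
      constructor
      · intro i; rw [hcs i]; have := h1 i; linarith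
      · rw [hlastw, hcs 0]
        rw [Finset.sum_congr rfl fun i _ => hcs i, Finset.sum_sub_distrib]
        simp only [Finset.sum_const, Finset.card_univ, Fintype.card_fin, nsmul_eq_mul, mul_one]
        linarith
    have hwlat : isLat w := isLat_sub hlat vf_lat
    exact ⟨w, latQ_mem hd w hwQ hwlat, by rw [hwdef]; abel⟩
  · rintro ⟨w, hw, rfl⟩
    obtain ⟨hwQ, hwlat⟩ := Msemi_subset hw
    refine ⟨?_, isLat_add vf_lat hwlat⟩
    rw [cone_eq]
    apply interior_subset_intrinsicInterior
    apply U_subset_interior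
    constructor
    · intro i
      have := hwQ.1 i
      simp only [Pi.add_apply, vf_cs]
      linarith
    · simp only [Pi.add_apply, vf_cs, vf_last, Finset.sum_add_distrib, sum_vf,
        Finset.sum_const, Finset.card_univ, Fintype.card_fin, nsmul_eq_mul, mul_one]
      have := hwQ.2
      linarith

end Aux

/-- for the simplex with vertices `0, 2e₁, e₂, …, e_d` in `ℝ^d`,
`M*(σ) = (1,…,1,d) + M(σ)`, and consequently `rdeg x = d` for all `x ∈ M*(σ)`. -/
theorem stmt13 {d : ℕ} (hd : 1 ≤ d) (σ : Set (Fin d → ℝ))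
    (hσ : σ = convexHull ℝ (Set.range (fun k : Fin (d + 1) => fun i : Fin d =>
      if (k : ℕ) = 0 then (0 : ℝ)
      else if (k : ℕ) = 1 ∧ (i : ℕ) = 0 then 2
      else if (i : ℕ) + 1 = (k : ℕ) then 1 else 0))) :
    (∀ y, y ∈ Mstar σ ↔ ∃ w ∈ Msemi σ,
        y = (fun k : Fin (d + 1) => if (k : ℕ) = d then (d : ℝ) else 1) + w) ∧
    ∀ y ∈ Mstar σ, rdeg σ y = d := by
  haveI : NeZero d := ⟨Nat.one_le_iff_ne_zero.1 hd⟩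
  have hP : convexHull ℝ (Set.range (fun k : Fin (d + 1) => fun i : Fin d =>
      if (k : ℕ) = 0 then (0 : ℝ)
      else if (k : ℕ) = 1 ∧ (i : ℕ) = 0 then 2
      else if (i : ℕ) + 1 = (k : ℕ) then 1 else 0)) = Pset d := hull_eq
  subst hσ
  rw [hP]
  have hvf : (fun k : Fin (d + 1) => if (k : ℕ) = d then (d : ℝ) else 1) = vf d := rfl
  rw [hvf]
  refine ⟨fun y => mstar_iff y, ?_⟩
  intro y hy
  obtain ⟨w, hw, hyw⟩ := (mstar_iff y).1 hy
  have hvmem : vf d ∈ Mstar (Pset d) :=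
    (mstar_iff _).2 ⟨0, (Msemi (Pset d)).zero_mem, (add_zero _).symm⟩
  have hlb : ∀ r ∈ {r | ∃ z w, z ∈ Mstar (Pset d) ∧ w ∈ Msemi (Pset d) ∧ y = z + w ∧ r = deg z},
      (d:ℝ) ≤ r := by
    rintro r ⟨z, w', hz, hw', hyzw, rfl⟩
    obtain ⟨u, hu, rfl⟩ := (mstar_iff z).1 hz
    have h0 : 0 ≤ u (Fin.last d) := deg_nonneg (Msemi_subset hu).1
    show (d:ℝ) ≤ (vf d + u) (Fin.last d)
    rw [Pi.add_apply, vf_last]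
    linarith
  have hdmem : (d:ℝ) ∈
      {r | ∃ z w, z ∈ Mstar (Pset d) ∧ w ∈ Msemi (Pset d) ∧ y = z + w ∧ r = deg z} :=
    ⟨vf d, w, hvmem, hw, hyw, vf_last.symm⟩
  show sInf {r | ∃ z w, z ∈ Mstar (Pset d) ∧ w ∈ Msemi (Pset d) ∧ y = z + w ∧ r = deg z} = d
  apply le_antisymm
  · exact csInf_le ⟨(d:ℝ), hlb⟩ hdmem
  · exact le_csInf ⟨_, hdmem⟩ hlb
end
end

section
/- Let d ≥ 2 and let 𝒫 ⊂ ℝ^d be the polytope defined by 0 ≤ x_i ≤ 2 for 1 ≤ i ≤ d−1, 0 ≤ x_d ≤ d, and x_1 + ··· + x_d ≤ d+1. Then the set of reduced degrees { rdeg y : y ∈ M*(𝒫) } equals {1, 2, ..., d−1}. -/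
open Set

noncomputable section

namespace Stmt15

open Finset

variable {d : ℕ}

/-- upper-bound coefficient for coordinate `j`. -/
def capZ (d : ℕ) (j : Fin d) : ℤ := if (j : ℕ) < d - 1 then 2 else (d : ℤ)

def capR (d : ℕ) (j : Fin d) : ℝ := ((capZ d j : ℤ) : ℝ)

lemma two_le_capZ (hd : 2 ≤ d) (j : Fin d) : 2 ≤ capZ d j := by
  unfold capZ; split
  · exact le_rfl
  · exact_mod_cast hd

lemma capZ_pos (hd : 2 ≤ d) (j : Fin d) : 0 < capZ d j :=
  lt_of_lt_of_le (by norm_num) (two_le_capZ hd j)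

lemma capR_pos (hd : 2 ≤ d) (j : Fin d) : 0 < capR d j := by
  have := capZ_pos hd j; unfold capR; exact_mod_cast this

/-- The closed cone over `P`, described by inequalities. -/
def stdCone (d : ℕ) : Set (Fin (d + 1) → ℝ) :=
  {y | 0 ≤ y (Fin.last d) ∧
    (∀ j : Fin d, 0 ≤ y j.castSucc ∧ y j.castSucc ≤ capR d j * y (Fin.last d)) ∧
    ∑ j : Fin d, y j.castSucc ≤ ((d : ℝ) + 1) * y (Fin.last d)}

/-- The interior of the cone. -/
def stdOpen (d : ℕ) : Set (Fin (d + 1) → ℝ) :=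
  {y | (∀ j : Fin d, 0 < y j.castSucc ∧ y j.castSucc < capR d j * y (Fin.last d)) ∧
    ∑ j : Fin d, y j.castSucc < ((d : ℝ) + 1) * y (Fin.last d)}

/-- A convenient restatement of membership in `P`. -/
def GoodP (d : ℕ) (P : Set (Fin d → ℝ)) : Prop :=
  ∀ p : Fin d → ℝ, p ∈ P ↔
    (∀ j : Fin d, 0 ≤ p j ∧ p j ≤ capR d j) ∧ ∑ j, p j ≤ (d : ℝ) + 1

lemma lift_castSucc (p : Fin d → ℝ) (j : Fin d) : lift p j.castSucc = p j := by
  simp [lift, Fin.snoc_castSucc]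

lemma lift_last (p : Fin d → ℝ) : lift p (Fin.last d) = 1 := by
  simp [lift, Fin.snoc_last]

lemma cone_eq (hd : 2 ≤ d) {P : Set (Fin d → ℝ)} (hPm : GoodP d P) :
    coneOf P = stdCone d := by
  ext y
  constructor
  · rintro ⟨c, p, hc, hp, rfl⟩
    obtain ⟨hco, hsum⟩ := (hPm p).1 hp
    have hl : ∀ j : Fin d, (c • lift p) j.castSucc = c * p j := by
      intro j; simp [lift_castSucc]
    have hL : (c • lift p) (Fin.last d) = c := by simp [lift_last]
    refine ⟨by rw [hL]; exact hc, fun j => ?_, ?_⟩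
    · rw [hl j, hL]
      refine ⟨mul_nonneg hc (hco j).1, ?_⟩
      calc c * p j ≤ c * capR d j := mul_le_mul_of_nonneg_left (hco j).2 hc
        _ = capR d j * c := mul_comm _ _
    · rw [hL]
      calc ∑ j : Fin d, (c • lift p) j.castSucc = c * ∑ j, p j := by
            rw [Finset.mul_sum]; exact Finset.sum_congr rfl fun j _ => hl j
        _ ≤ c * ((d : ℝ) + 1) := mul_le_mul_of_nonneg_left hsum hc
        _ = ((d : ℝ) + 1) * c := mul_comm _ _
  · rintro ⟨h0, hj, hs⟩
    rcases eq_or_lt_of_le h0 with hc | hc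
    · refine ⟨0, fun _ => 1, le_rfl, ?_, ?_⟩
      · rw [hPm]
        refine ⟨fun j => ⟨zero_le_one, ?_⟩, ?_⟩
        · have := two_le_capZ hd j
          unfold capR; exact_mod_cast le_trans (by norm_num) this
        · simp only [Finset.sum_const, Finset.card_univ, Fintype.card_fin, nsmul_eq_mul,
            mul_one]
          have h1 : (1 : ℝ) ≤ (d : ℝ) := by exact_mod_cast le_trans one_le_two hd
          linarith
      · funext i
        refine Fin.lastCases ?_ ?_ i
        · simp only [Pi.smul_apply, lift_last, zero_smul, smul_eq_mul]
          rw [zero_mul]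
          exact hc.symm
        · intro j
          simp only [Pi.smul_apply, lift_castSucc, smul_eq_mul, zero_mul]
          have h2 := (hj j).2
          rw [← hc, mul_zero] at h2
          exact le_antisymm h2 (hj j).1
    · refine ⟨y (Fin.last d), fun j => y j.castSucc / y (Fin.last d), h0, ?_, ?_⟩
      · rw [hPm]
        refine ⟨fun j => ⟨div_nonneg (hj j).1 h0, ?_⟩, ?_⟩
        · rw [div_le_iff₀ hc]; exact (hj j).2
        · rw [← Finset.sum_div, div_le_iff₀ hc]; exact hs
      · funext i
        refine Fin.lastCases ?_ ?_ i
        · simp [lift_last]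
        · intro j
          simp only [Pi.smul_apply, lift_castSucc, smul_eq_mul]
          rw [mul_comm, div_mul_cancel₀ _ (ne_of_gt hc)]

lemma isOpen_stdOpen : IsOpen (stdOpen d) := by
  have h1 : stdOpen d = (⋂ j : Fin d, ({y : Fin (d+1) → ℝ | 0 < y j.castSucc} ∩
      {y | y j.castSucc < capR d j * y (Fin.last d)})) ∩
      {y | ∑ j : Fin d, y j.castSucc < ((d : ℝ) + 1) * y (Fin.last d)} := by
    ext y
    simp only [stdOpen, mem_setOf_eq, mem_inter_iff, mem_iInter, forall_and]
  rw [h1]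
  refine IsOpen.inter (isOpen_iInter_of_finite fun j => IsOpen.inter ?_ ?_) ?_
  · exact isOpen_lt continuous_const (continuous_apply _)
  · exact isOpen_lt (continuous_apply _) (continuous_const.mul (continuous_apply _))
  · exact isOpen_lt (by exact continuous_finset_sum _ fun j _ => continuous_apply _)
      (continuous_const.mul (continuous_apply _))

lemma last_pos_of_mem (hd : 2 ≤ d) {y : Fin (d+1) → ℝ} (hy : y ∈ stdOpen d) :
    0 < y (Fin.last d) := by
  have j0 : Fin d := ⟨0, by omega⟩
  have h := hy.1 j0
  nlinarith [capR_pos hd j0, h.1, h.2]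

lemma stdOpen_subset (hd : 2 ≤ d) : stdOpen d ⊆ stdCone d := by
  intro y hy
  exact ⟨(last_pos_of_mem hd hy).le, fun j => ⟨(hy.1 j).1.le, (hy.1 j).2.le⟩, hy.2.le⟩

lemma convex_stdCone : Convex ℝ (stdCone d) := by
  intro y hy z hz a b ha hb hab
  obtain ⟨hy0, hyj, hys⟩ := hy
  obtain ⟨hz0, hzj, hzs⟩ := hz
  have hev : ∀ i : Fin (d+1), (a • y + b • z) i = a * y i + b * z i := fun i => rfl
  refine ⟨?_, fun j => ⟨?_, ?_⟩, ?_⟩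
  · rw [hev]; exact add_nonneg (mul_nonneg ha hy0) (mul_nonneg hb hz0)
  · rw [hev]; exact add_nonneg (mul_nonneg ha (hyj j).1) (mul_nonneg hb (hzj j).1)
  · rw [hev, hev]
    have h1 := mul_le_mul_of_nonneg_left (hyj j).2 ha
    have h2 := mul_le_mul_of_nonneg_left (hzj j).2 hb
    nlinarith
  · have : ∀ j : Fin d, (a • y + b • z) j.castSucc = a * y j.castSucc + b * z j.castSucc :=
      fun j => rfl
    rw [Finset.sum_congr rfl fun j _ => this j, Finset.sum_add_distrib, hev,
      ← Finset.mul_sum, ← Finset.mul_sum]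
    nlinarith

lemma allOnes_mem (hd : 2 ≤ d) : (fun _ => (1 : ℝ)) ∈ stdOpen d := by
  have hdr : (2 : ℝ) ≤ (d : ℝ) := by exact_mod_cast hd
  constructor
  · intro j
    refine ⟨one_pos, ?_⟩
    have := two_le_capZ hd j
    have h2 : (2 : ℝ) ≤ capR d j := by unfold capR; exact_mod_cast this
    show (1 : ℝ) < capR d j * 1
    rw [mul_one]; linarith
  · simp only [Finset.sum_const, Finset.card_univ, Fintype.card_fin, nsmul_eq_mul, mul_one]
    linarith

lemma interior_stdCone (hd : 2 ≤ d) : interior (stdCone d) = stdOpen d := by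
  apply Set.Subset.antisymm
  · intro y hy
    obtain ⟨ε, hε, hball⟩ := Metric.mem_nhds_iff.1 (mem_interior_iff_mem_nhds.1 hy)
    have key : ∀ v : Fin (d + 1) → ℝ, (∀ i, |v i| ≤ ε / 2) → y + v ∈ stdCone d := by
      intro v hv
      apply hball
      rw [Metric.mem_ball]
      have hle : dist (y + v) y ≤ ε / 2 := by
        rw [dist_pi_le_iff (by positivity)]
        intro i
        have : (y + v) i - y i = v i := by simp
        rw [Real.dist_eq, this]
        exact hv i
      linarith
    have bump : ∀ i0 : Fin (d + 1),
        y + (Pi.single i0 (-(ε / 2)) : Fin (d + 1) → ℝ) ∈ stdCone d := by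
      intro i0
      apply key
      intro i
      rcases eq_or_ne i i0 with rfl | hne
      · rw [Pi.single_eq_same, abs_neg, abs_of_nonneg (by positivity)]
      · rw [Pi.single_eq_of_ne hne, abs_zero]; positivity
    have hlastne : ∀ j : Fin d, j.castSucc ≠ Fin.last d := fun j => (Fin.castSucc_lt_last j).ne
    have hblast := bump (Fin.last d)
    have heval : ∀ j : Fin d,
        (y + (Pi.single (Fin.last d) (-(ε / 2)) : Fin (d + 1) → ℝ)) j.castSucc
        = y j.castSucc := by
      intro j
      simp [Pi.single_eq_of_ne (hlastne j)]
    have hevalL : (y + (Pi.single (Fin.last d) (-(ε / 2)) : Fin (d + 1) → ℝ)) (Fin.last d)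
        = y (Fin.last d) - ε / 2 := by
      simp [Pi.single_eq_same]
      ring
    refine ⟨fun j => ⟨?_, ?_⟩, ?_⟩
    · have h := ((bump j.castSucc).2.1 j).1
      have he : (y + (Pi.single j.castSucc (-(ε / 2)) : Fin (d + 1) → ℝ)) j.castSucc
          = y j.castSucc - ε / 2 := by
        simp [Pi.single_eq_same]; ring
      rw [he] at h
      linarith
    · have h := (hblast.2.1 j).2
      rw [heval j, hevalL] at h
      have hc := capR_pos hd j
      nlinarith
    · have h := hblast.2.2
      rw [hevalL, Finset.sum_congr rfl fun j _ => heval j] at h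
      have : (0 : ℝ) < (d : ℝ) + 1 := by positivity
      nlinarith
  · exact interior_maximal (stdOpen_subset hd) isOpen_stdOpen

lemma intrinsic_eq (hd : 2 ≤ d) {P : Set (Fin d → ℝ)} (hPm : GoodP d P) :
    intrinsicInterior ℝ (coneOf P) = stdOpen d := by
  rw [cone_eq hd hPm]
  have hspan : affineSpan ℝ (stdCone d) = ⊤ := by
    rw [← Convex.interior_nonempty_iff_affineSpan_eq_top convex_stdCone,
      interior_stdCone hd]
    exact ⟨_, allOnes_mem hd⟩
  apply Set.Subset.antisymm
  · intro x hx
    obtain ⟨z, hz, rfl⟩ := mem_intrinsicInterior.1 hx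
    rw [← interior_stdCone hd]
    have hopen : IsOpenMap ((↑) : affineSpan ℝ (stdCone d) → (Fin (d + 1) → ℝ)) := by
      exact IsOpen.isOpenMap_subtype_val (by rw [hspan]; simp)
    have hrange : Set.range ((↑) : affineSpan ℝ (stdCone d) → (Fin (d + 1) → ℝ)) = univ := by
      rw [Subtype.range_coe]
      rw [hspan]; simp
    have himg := hopen.image_interior_subset ((↑) ⁻¹' stdCone d)
    have hx' : (z : Fin (d + 1) → ℝ) ∈
        Subtype.val '' interior (((↑) : affineSpan ℝ (stdCone d) → (Fin (d + 1) → ℝ)) ⁻¹'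
          stdCone d) := mem_image_of_mem _ hz
    have := himg hx'
    rwa [Set.image_preimage_eq_inter_range, hrange, inter_univ] at this
  · rw [← interior_stdCone hd]
    exact interior_subset_intrinsicInterior

lemma mem_Mstar_iff (hd : 2 ≤ d) {P : Set (Fin d → ℝ)} (hPm : GoodP d P)
    {y : Fin (d + 1) → ℝ} : y ∈ Mstar P ↔ isLat y ∧ y ∈ stdOpen d := by
  unfold Mstar; rw [mem_setOf_eq, intrinsic_eq hd hPm, and_comm]

lemma Msemi_bounds {P : Set (Fin d → ℝ)} (hPm : GoodP d P)
    {w : Fin (d + 1) → ℝ} (hw : w ∈ Msemi P) :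
    (∀ i, 0 ≤ w i) ∧ (∀ j : Fin d, w j.castSucc ≤ capR d j * w (Fin.last d)) := by
  let T : AddSubmonoid (Fin (d + 1) → ℝ) :=
    { carrier := {w | (∀ i, 0 ≤ w i) ∧ ∀ j : Fin d, w j.castSucc ≤ capR d j * w (Fin.last d)}
      zero_mem' := ⟨fun i => le_rfl, fun j => by simp⟩
      add_mem' := by
        rintro u v ⟨hu1, hu2⟩ ⟨hv1, hv2⟩
        refine ⟨fun i => add_nonneg (hu1 i) (hv1 i), fun j => ?_⟩
        have := hu2 j; have := hv2 j
        show u j.castSucc + v j.castSucc ≤ _ * (u (Fin.last d) + v (Fin.last d))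
        nlinarith }
  have hle : Msemi P ≤ T := by
    rw [Msemi, AddSubmonoid.closure_le]
    rintro y ⟨p, hp, hpl, rfl⟩
    obtain ⟨hco, hsum⟩ := (hPm p).1 hp
    constructor
    · intro i
      refine Fin.lastCases ?_ ?_ i
      · rw [lift_last]; norm_num
      · intro j; rw [lift_castSucc]; exact (hco j).1
    · intro j
      rw [lift_castSucc, lift_last, mul_one]
      exact (hco j).2
  exact hle hw

lemma latVec {n : ℕ} {x : Fin n → ℝ} (h : isLat x) :
    ∃ X : Fin n → ℤ, ∀ i, x i = (X i : ℝ) := by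
  exact ⟨fun i => (h i).choose, fun i => (h i).choose_spec⟩

lemma box_sum : ∀ (n : ℕ) (l u : Fin n → ℤ), (∀ i, l i ≤ u i) →
    ∀ m : ℤ, (∑ i, l i) ≤ m → m ≤ (∑ i, u i) →
    ∃ p : Fin n → ℤ, (∀ i, l i ≤ p i ∧ p i ≤ u i) ∧ (∑ i, p i) = m := by
  intro n
  induction n with
  | zero =>
    intro l u h m h1 h2
    refine ⟨l, fun i => ⟨le_rfl, h i⟩, ?_⟩
    simp only [Finset.univ_eq_empty, Finset.sum_empty] at h1 h2 ⊢
    omega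
  | succ n IH =>
    intro l u h m h1 h2
    rw [Fin.sum_univ_castSucc] at h1
    rw [Fin.sum_univ_castSucc (f := u)] at h2
    set sl := ∑ i : Fin n, l i.castSucc with hsl
    set su := ∑ i : Fin n, u i.castSucc with hsu
    have hslu : sl ≤ su := Finset.sum_le_sum fun i _ => h i.castSucc
    set pn := max (l (Fin.last n)) (min (u (Fin.last n)) (m - sl)) with hpn
    have hln : l (Fin.last n) ≤ pn := le_max_left _ _
    have hun : pn ≤ u (Fin.last n) := max_le (h _) (min_le_left _ _)
    have h1' : sl ≤ m - pn := by
      have : pn ≤ m - sl := max_le (by omega) (min_le_right _ _)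
      omega
    have h2' : m - pn ≤ su := by
      have : min (u (Fin.last n)) (m - sl) ≥ m - su := le_min (by omega) (by omega)
      have : pn ≥ m - su := le_trans this (le_max_right _ _)
      omega
    obtain ⟨p', hp', hps⟩ := IH (fun i => l i.castSucc) (fun i => u i.castSucc)
      (fun i => h i.castSucc) (m - pn) h1' h2'
    refine ⟨Fin.snoc p' pn, fun i => ?_, ?_⟩
    · refine Fin.lastCases ?_ ?_ i
      · simp only [Fin.snoc_last]; exact ⟨hln, hun⟩
      · intro j; simp only [Fin.snoc_castSucc]; exact hp' j
    · rw [Fin.sum_univ_castSucc]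
      simp only [Fin.snoc_castSucc, Fin.snoc_last]
      rw [hps]; omega

lemma filter_not_short (hd : 2 ≤ d) :
    univ.filter (fun j : Fin d => ¬ ((j : ℕ) < d - 1)) = {(⟨d - 1, Nat.sub_lt (by omega) Nat.one_pos⟩ : Fin d)} := by
  ext j
  simp only [Finset.mem_filter, Finset.mem_univ, true_and, Finset.mem_singleton,
    Fin.ext_iff, Fin.val_mk]
  have := j.isLt
  omega

lemma card_short (hd : 2 ≤ d) :
    (univ.filter (fun j : Fin d => (j : ℕ) < d - 1)).card = d - 1 := by
  have h := Finset.card_filter_add_card_filter_not (s := (univ : Finset (Fin d)))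
    (p := fun j : Fin d => (j : ℕ) < d - 1)
  rw [filter_not_short hd, Finset.card_singleton, Finset.card_univ, Fintype.card_fin] at h
  omega

lemma sum_split (hd : 2 ≤ d) {M : Type*} [AddCommMonoid M] (f : Fin d → M) :
    ∑ j, f j = (∑ j ∈ univ.filter (fun j : Fin d => (j : ℕ) < d - 1), f j)
      + f ⟨d - 1, Nat.sub_lt (by omega) Nat.one_pos⟩ := by
  rw [← Finset.sum_filter_add_sum_filter_not univ (fun j : Fin d => (j : ℕ) < d - 1) f,
    filter_not_short hd, Finset.sum_singleton]

lemma sum_l_le (hd : 2 ≤ d) (t : ℤ) (ht : (d : ℤ) ≤ t) (x : Fin d → ℤ)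
    (hx : ∀ j, 1 ≤ x j ∧ x j ≤ capZ d j * t - 1) (hs : ∑ j, x j ≤ ((d : ℤ) + 1) * t - 1) :
    ∑ j, max 0 (x j - (capZ d j * (t - 1) - 1)) ≤ (d : ℤ) + 1 := by
  have hD : (2 : ℤ) ≤ (d : ℤ) := by exact_mod_cast hd
  have ht2 : (2 : ℤ) ≤ t := le_trans hD ht
  set D := (d : ℤ) with hDdef
  set S := univ.filter (fun j : Fin d => (j : ℕ) < d - 1) with hS
  set sp : Fin d := ⟨d - 1, Nat.sub_lt (by omega) Nat.one_pos⟩ with hsp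
  set l : Fin d → ℤ := fun j => max 0 (x j - (capZ d j * (t - 1) - 1)) with hl
  have hcapS : ∀ j ∈ S, capZ d j = 2 := fun j hj => if_pos (Finset.mem_filter.1 hj).2
  have hcapsp : capZ d sp = D := if_neg (lt_irrefl _)
  have hsplit : ∀ f : Fin d → ℤ, ∑ j, f j = (∑ j ∈ S, f j) + f sp := fun f => sum_split hd f
  -- pointwise bounds
  have hshort : ∀ j ∈ S, l j * (t - 1) ≤ x j - 1 := by
    intro j hj
    have h1 := (hx j).1
    have h2 := (hx j).2
    rw [hcapS j hj] at h2
    simp only [hl]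
    rcases le_or_gt (x j - (capZ d j * (t - 1) - 1)) 0 with h | h
    · rw [max_eq_left h]; simp; omega
    · rw [max_eq_right h.le, hcapS j hj]
      nlinarith [mul_nonneg (by omega : (0:ℤ) ≤ 2 * t - 1 - x j) (by omega : (0:ℤ) ≤ t - 2)]
  have hspb : l sp * (D * t - 2) ≤ D * (x sp - 1) := by
    have h1 := (hx sp).1
    have h2 := (hx sp).2
    rw [hcapsp] at h2
    simp only [hl]
    rcases le_or_gt (x sp - (capZ d sp * (t - 1) - 1)) 0 with h | h
    · rw [max_eq_left h]
      have : (0:ℤ) ≤ D * (x sp - 1) := mul_nonneg (by omega) (by omega)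
      simpa using this
    · rw [max_eq_right h.le, hcapsp]
      nlinarith [mul_nonneg (by omega : (0:ℤ) ≤ D * t - 1 - x sp)
        (by nlinarith : (0:ℤ) ≤ D * t - 2 - D)]
  -- positivity of multipliers
  have hpos1 : (0:ℤ) < t - 1 := by omega
  have hpos2 : (0:ℤ) < D * t - 2 := by nlinarith
  -- summed bound for shorts
  have hsum1 : (∑ j ∈ S, l j) * (t - 1) ≤ ∑ j ∈ S, (x j - 1) := by
    rw [Finset.sum_mul]
    exact Finset.sum_le_sum hshort
  have hcard : (S.card : ℤ) = D - 1 := by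
    rw [hS, card_short hd, hDdef]
    push_cast [Nat.cast_sub (le_trans one_le_two hd)]
    ring
  have hsum2 : ∑ j ∈ S, (x j - 1) = (∑ j ∈ S, x j) - (D - 1) := by
    rw [Finset.sum_sub_distrib, Finset.sum_const, ← hcard]
    simp
  have hSx : (∑ j ∈ S, x j) = (∑ j, x j) - x sp := by rw [hsplit x]; ring
  have hxsp1 : 1 ≤ x sp := (hx sp).1
  -- final assembly
  have key : (∑ j, l j) * ((t - 1) * (D * t - 2)) ≤ (D + 1) * ((t - 1) * (D * t - 2)) := by
    rw [hsplit l]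
    have e1 : ((∑ j ∈ S, l j) + l sp) * ((t - 1) * (D * t - 2))
        = ((∑ j ∈ S, l j) * (t - 1)) * (D * t - 2) + (l sp * (D * t - 2)) * (t - 1) := by
      ring
    rw [e1]
    have e2 : ((∑ j ∈ S, l j) * (t - 1)) * (D * t - 2)
        ≤ (∑ j ∈ S, (x j - 1)) * (D * t - 2) :=
      mul_le_mul_of_nonneg_right hsum1 hpos2.le
    have e3 : (l sp * (D * t - 2)) * (t - 1) ≤ (D * (x sp - 1)) * (t - 1) :=
      mul_le_mul_of_nonneg_right hspb hpos1.le
    have e4 : (∑ j ∈ S, (x j - 1)) ≤ (D + 1) * t - 1 - x sp - (D - 1) := by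
      rw [hsum2, hSx]; omega
    have e5 : (∑ j ∈ S, (x j - 1)) * (D * t - 2) ≤ ((D + 1) * t - 1 - x sp - (D - 1)) * (D * t - 2) :=
      mul_le_mul_of_nonneg_right e4 hpos2.le
    nlinarith [mul_nonneg (by omega : (0:ℤ) ≤ x sp - 1) (by omega : (0:ℤ) ≤ D - 2)]
  exact le_of_mul_le_mul_right key (by positivity)

lemma sum_u_ge (hd : 2 ≤ d) (t : ℤ) (ht : (d : ℤ) ≤ t) (x : Fin d → ℤ)
    (hx : ∀ j, 1 ≤ x j ∧ x j ≤ capZ d j * t - 1) (hs : ∑ j, x j ≤ ((d : ℤ) + 1) * t - 1) :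
    (∑ j, x j) - (((d : ℤ) + 1) * (t - 1) - 1) ≤ ∑ j, min (capZ d j) (x j - 1) := by
  have hD : (2 : ℤ) ≤ (d : ℤ) := by exact_mod_cast hd
  have ht2 : (2 : ℤ) ≤ t := le_trans hD ht
  set D := (d : ℤ) with hDdef
  set S := univ.filter (fun j : Fin d => (j : ℕ) < d - 1) with hS
  set sp : Fin d := ⟨d - 1, Nat.sub_lt (by omega) Nat.one_pos⟩ with hsp
  have hcapS : ∀ j ∈ S, capZ d j = 2 := fun j hj => if_pos (Finset.mem_filter.1 hj).2
  have hcapsp : capZ d sp = D := if_neg (lt_irrefl _)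
  have hsplit : ∀ f : Fin d → ℤ, ∑ j, f j = (∑ j ∈ S, f j) + f sp := fun f => sum_split hd f
  set v : Fin d → ℤ := fun j => x j - min (capZ d j) (x j - 1) with hv
  -- it suffices to bound the sum of v
  have hsuf : (∑ j, v j) ≤ (D + 1) * (t - 1) - 1 → (∑ j, x j) - ((D + 1) * (t - 1) - 1)
      ≤ ∑ j, min (capZ d j) (x j - 1) := by
    intro h
    have : ∑ j, v j = (∑ j, x j) - ∑ j, min (capZ d j) (x j - 1) := by
      rw [hv, Finset.sum_sub_distrib]
    omega
  apply hsuf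
  set A := S.filter (fun j => 3 ≤ x j) with hA
  have hsubSA : ∀ j ∈ A, j ∈ S := fun j hj => (Finset.mem_filter.1 hj).1
  set m := (A.card : ℤ) with hmdef
  have hcardS : (S.card : ℤ) = D - 1 := by
    rw [hS, card_short hd, hDdef]
    push_cast [Nat.cast_sub (le_trans one_le_two hd)]
    ring
  have hcardSA : ((S \ A).card : ℤ) = (D - 1) - m := by
    rw [Finset.card_sdiff_of_subset (Finset.filter_subset _ _), hmdef, ← hcardS]
    have hle := Finset.card_filter_le S (fun j => 3 ≤ x j)
    rw [← hA] at hle ⊢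
    push_cast [Nat.cast_sub hle]
    ring
  have hvA : ∀ j ∈ A, v j = x j - 2 := by
    intro j hj
    obtain ⟨hjS, hj3⟩ := Finset.mem_filter.1 hj
    rw [hv]
    simp only
    rw [hcapS j hjS, min_eq_left (by omega)]
  have hvSA : ∀ j ∈ S \ A, v j = 1 := by
    intro j hj
    obtain ⟨hjS, hjA⟩ := Finset.mem_sdiff.1 hj
    have hx3 : x j < 3 := by
      by_contra h
      exact hjA (Finset.mem_filter.2 ⟨hjS, by omega⟩)
    rw [hv]
    simp only
    rw [hcapS j hjS, min_eq_right (by omega)]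
    omega
  have hSsum : ∑ j ∈ S, v j = (∑ j ∈ A, (x j - 2)) + ((D - 1) - m) := by
    rw [← Finset.sum_sdiff (Finset.filter_subset (fun j => 3 ≤ x j) S)]
    rw [← hA]
    rw [Finset.sum_congr rfl hvSA, Finset.sum_congr rfl hvA, Finset.sum_const, ← hcardSA]
    simp [add_comm]
  have hAx2 : ∑ j ∈ A, (x j - 2) = (∑ j ∈ A, x j) - 2 * m := by
    rw [Finset.sum_sub_distrib, Finset.sum_const, hmdef]
    simp [mul_comm]
  -- bound 1 : via the total sum
  have hb1 : ∑ j ∈ A, x j ≤ (∑ j ∈ S, x j) - ((D - 1) - m) := by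
    have h1 : ∑ j ∈ S, x j = (∑ j ∈ A, x j) + ∑ j ∈ S \ A, x j := by
      rw [← Finset.sum_sdiff (Finset.filter_subset (fun j => 3 ≤ x j) S), ← hA]
      ring
    have h2 : ((D - 1) - m) ≤ ∑ j ∈ S \ A, x j := by
      rw [← hcardSA]
      calc ((S \ A).card : ℤ) = ∑ _j ∈ S \ A, 1 := by simp
        _ ≤ ∑ j ∈ S \ A, x j := Finset.sum_le_sum fun j hj => (hx j).1
    omega
  -- bound 2 : via the coordinate caps
  have hb2 : ∑ j ∈ A, x j ≤ m * (2 * t - 1) := by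
    rw [hmdef]
    calc ∑ j ∈ A, x j ≤ ∑ _j ∈ A, (2 * t - 1) := Finset.sum_le_sum (fun j hj => by
          have h2 := (hx j).2
          rw [hcapS j (hsubSA j hj)] at h2
          omega)
      _ = (A.card : ℤ) * (2 * t - 1) := by simp [mul_comm]; ring
  have hm0 : 0 ≤ m := by rw [hmdef]; positivity
  have hxsp := hx sp
  rw [hcapsp] at hxsp
  have hSx : (∑ j ∈ S, x j) = (∑ j, x j) - x sp := by rw [hsplit x]; ring
  have hvsp : v sp = max (x sp - D) 1 := by
    rw [hv]
    simp only
    rw [hcapsp]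
    rcases le_or_gt (x sp - 1) D with h | h
    · rw [min_eq_right h, max_eq_right (by omega)]; omega
    · rw [min_eq_left h.le, max_eq_left (by omega)]
  have hA2a : (∑ j ∈ A, (x j - 2)) ≤ ((∑ j, x j) - x sp) - ((D - 1) - m) - 2 * m := by
    rw [hAx2]; omega
  have hA2b : (∑ j ∈ A, (x j - 2)) ≤ m * (2 * t - 1) - 2 * m := by
    rw [hAx2]; omega
  have hxsp1 : 1 ≤ x sp := hxsp.1
  have hxsp2 : x sp ≤ D * t - 1 := hxsp.2
  rw [hsplit v, hSsum, hvsp]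
  rcases le_or_gt (x sp) D with ha | ha
  · -- v sp = 1
    rw [max_eq_right (by omega)]
    have e1 : (D + 1) * (t - 1) = (D + 1) * t - D - 1 := by ring
    rcases le_or_gt (2 * m) D with hm | hm
    · have hprod : (0:ℤ) ≤ (t - 2) * (D + 1 - 2 * m) :=
        mul_nonneg (by omega) (by omega)
      have e2 : m * (2 * t - 1) = 2 * (m * t) - m := by ring
      have e3 : (t - 2) * (D + 1 - 2 * m) = (D + 1) * t - 2 * (m * t) - 2 * D - 2 + 4 * m := by
        ring
      omega
    · omega
  · -- v sp = x sp - D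
    rw [max_eq_left (by omega)]
    have e1 : (D + 1) * (t - 1) = D * t + t - D - 1 := by ring
    rcases eq_or_lt_of_le hm0 with hm | hm
    · -- m = 0 : all short coordinates are ≤ 2
      have hA0 : (∑ j ∈ A, (x j - 2)) = 0 := by
        have h0 : (A.card : ℤ) = 0 := by rw [← hmdef]; exact hm.symm
        have h0' : A.card = 0 := by exact_mod_cast h0
        rw [Finset.card_eq_zero.1 h0', Finset.sum_empty]
      rw [hA0]
      omega
    · -- m ≥ 1 : use bound 1
      have e2 : (D + 1) * t = D * t + t := by ring
      omega

lemma step_int (hd : 2 ≤ d) (t : ℤ) (ht : (d : ℤ) ≤ t) (x : Fin d → ℤ)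
    (hx : ∀ j, 1 ≤ x j ∧ x j ≤ capZ d j * t - 1) (hs : ∑ j, x j ≤ ((d : ℤ) + 1) * t - 1) :
    ∃ p : Fin d → ℤ, (∀ j, 0 ≤ p j ∧ p j ≤ capZ d j) ∧ (∑ j, p j) ≤ (d : ℤ) + 1 ∧
      (∀ j, 1 ≤ x j - p j ∧ x j - p j ≤ capZ d j * (t - 1) - 1) ∧
      (∑ j, x j) - (∑ j, p j) ≤ ((d : ℤ) + 1) * (t - 1) - 1 := by
  have hD : (2 : ℤ) ≤ (d : ℤ) := by exact_mod_cast hd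
  have ht2 : (2 : ℤ) ≤ t := le_trans hD ht
  set l : Fin d → ℤ := fun j => max 0 (x j - (capZ d j * (t - 1) - 1)) with hl
  set u : Fin d → ℤ := fun j => min (capZ d j) (x j - 1) with hu
  have hlu : ∀ j, l j ≤ u j := by
    intro j
    have h1 := (hx j).1
    have h2 := (hx j).2
    have hc := two_le_capZ hd j
    have e1 : (2:ℤ) ≤ capZ d j * (t - 1) := by nlinarith
    have e2 : capZ d j * (t - 1) - 1 + capZ d j = capZ d j * t - 1 := by ring
    rw [hl, hu]
    simp only
    omega
  have hi : (∑ j, l j) ≤ (d : ℤ) + 1 := by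
    simpa [hl] using sum_l_le hd t ht x hx hs
  have hii : (∑ j, x j) - (((d : ℤ) + 1) * (t - 1) - 1) ≤ ∑ j, u j := by
    simpa [hu] using sum_u_ge hd t ht x hx hs
  set m := max (∑ j, l j) ((∑ j, x j) - (((d : ℤ) + 1) * (t - 1) - 1)) with hm
  have hm1 : (∑ j, l j) ≤ m := le_max_left _ _
  have hm2 : m ≤ ∑ j, u j := max_le (Finset.sum_le_sum fun j _ => hlu j) hii
  obtain ⟨p, hp, hps⟩ := box_sum d l u hlu m hm1 hm2
  have hexp : ((d : ℤ) + 1) * (t - 1) = ((d : ℤ) + 1) * t - ((d : ℤ) + 1) := by ring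
  refine ⟨p, fun j => ⟨?_, ?_⟩, ?_, fun j => ⟨?_, ?_⟩, ?_⟩
  · exact le_trans (le_max_left 0 _) (hp j).1
  · exact le_trans (hp j).2 (min_le_left _ _)
  · rw [hps, hm]
    apply max_le hi
    omega
  · have h := le_trans (hp j).2 (min_le_right _ _)
    omega
  · have h := le_trans (le_max_right 0 _) (hp j).1
    omega
  · rw [hps, hm]
    have := le_max_right (∑ j, l j) ((∑ j, x j) - (((d : ℤ) + 1) * (t - 1) - 1))
    omega

lemma deg_nat (hd : 2 ≤ d) {P : Set (Fin d → ℝ)} (hPm : GoodP d P)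
    {z : Fin (d + 1) → ℝ} (hz : z ∈ Mstar P) : ∃ n : ℕ, 1 ≤ n ∧ deg z = (n : ℝ) := by
  obtain ⟨hlat, hopen⟩ := (mem_Mstar_iff hd hPm).1 hz
  obtain ⟨Z, hZ⟩ := latVec hlat
  have hpos := last_pos_of_mem hd hopen
  rw [hZ] at hpos
  have h1 : 1 ≤ Z (Fin.last d) := by exact_mod_cast hpos
  refine ⟨(Z (Fin.last d)).toNat, by omega, ?_⟩
  rw [deg, hZ]
  have : ((Z (Fin.last d)).toNat : ℤ) = Z (Fin.last d) := Int.toNat_of_nonneg (by omega)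
  exact_mod_cast this.symm

lemma step_real (hd : 2 ≤ d) {P : Set (Fin d → ℝ)} (hPm : GoodP d P)
    {y : Fin (d + 1) → ℝ} (hy : y ∈ Mstar P) (ht : (d : ℝ) ≤ deg y) :
    ∃ p : Fin d → ℝ, (p ∈ P ∧ isLat p) ∧ y - lift p ∈ Mstar P ∧
      deg (y - lift p) = deg y - 1 := by
  obtain ⟨hlat, hopen⟩ := (mem_Mstar_iff hd hPm).1 hy
  obtain ⟨Y, hY⟩ := latVec hlat
  set t : ℤ := Y (Fin.last d) with htdef
  set x : Fin d → ℤ := fun j => Y j.castSucc with hxdef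
  have hcastR : ∀ j : Fin d, capR d j = ((capZ d j : ℤ) : ℝ) := fun j => rfl
  have htZ : (d : ℤ) ≤ t := by
    rw [deg, hY] at ht
    exact_mod_cast ht
  have hxh : ∀ j, 1 ≤ x j ∧ x j ≤ capZ d j * t - 1 := by
    intro j
    have h1 := (hopen.1 j).1
    have h2 := (hopen.1 j).2
    rw [hY] at h1
    rw [hY j.castSucc, hY (Fin.last d), hcastR] at h2
    constructor
    · exact_mod_cast h1
    · have : x j < capZ d j * t := by exact_mod_cast h2
      omega
  have hsh : (∑ j, x j) ≤ ((d : ℤ) + 1) * t - 1 := by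
    have h := hopen.2
    rw [Finset.sum_congr rfl fun j _ => hY j.castSucc, hY (Fin.last d)] at h
    have : ((∑ j, x j : ℤ) : ℝ) < (((d : ℤ) + 1) * t : ℤ) := by push_cast; exact_mod_cast h
    have h2 : (∑ j, x j) < ((d : ℤ) + 1) * t := by exact_mod_cast this
    omega
  obtain ⟨p, hp1, hp2, hp3, hp4⟩ := step_int hd t htZ x hxh hsh
  refine ⟨fun j => (p j : ℝ), ⟨?_, fun j => ⟨p j, rfl⟩⟩, ?_, ?_⟩
  · rw [hPm]
    refine ⟨fun j => ⟨by exact_mod_cast (hp1 j).1, ?_⟩, ?_⟩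
    · rw [hcastR]; exact_mod_cast (hp1 j).2
    · have : ((∑ j, p j : ℤ) : ℝ) ≤ (((d : ℤ) + 1 : ℤ) : ℝ) := by exact_mod_cast hp2
      push_cast at this ⊢
      convert this using 2
  · rw [mem_Mstar_iff hd hPm]
    have hevalj : ∀ j : Fin d, (y - lift fun j => (p j : ℝ)) j.castSucc
        = ((x j - p j : ℤ) : ℝ) := by
      intro j
      simp only [Pi.sub_apply, lift_castSucc, hY j.castSucc]
      push_cast
      rfl
    have hevalL : (y - lift fun j => (p j : ℝ)) (Fin.last d) = ((t - 1 : ℤ) : ℝ) := by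
      simp only [Pi.sub_apply, lift_last, hY (Fin.last d)]
      push_cast
      rfl
    refine ⟨?_, fun j => ⟨?_, ?_⟩, ?_⟩
    · intro i
      refine Fin.lastCases ?_ ?_ i
      · exact ⟨t - 1, hevalL⟩
      · intro j; exact ⟨x j - p j, hevalj j⟩
    · rw [hevalj]
      exact_mod_cast (hp3 j).1
    · rw [hevalj, hevalL, hcastR]
      have : (x j - p j : ℤ) < capZ d j * (t - 1) := by have := (hp3 j).2; omega
      exact_mod_cast this
    · rw [Finset.sum_congr rfl fun j _ => hevalj j, hevalL]
      have hZ2 : (∑ j, (x j - p j)) < ((d : ℤ) + 1) * (t - 1) := by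
        rw [Finset.sum_sub_distrib]
        omega
      have : ((∑ j, (x j - p j) : ℤ) : ℝ) < ((((d : ℤ) + 1) * (t - 1) : ℤ) : ℝ) := by
        exact_mod_cast hZ2
      push_cast at this ⊢
      convert this using 2
  · rw [deg, deg, Pi.sub_apply, lift_last]

lemma reduce (hd : 2 ≤ d) {P : Set (Fin d → ℝ)} (hPm : GoodP d P) :
    ∀ y ∈ Mstar P, ∃ z w, z ∈ Mstar P ∧ w ∈ Msemi P ∧ y = z + w ∧ deg z ≤ (d : ℝ) - 1 := by
  suffices H : ∀ n : ℕ, ∀ y ∈ Mstar P, deg y = (n : ℝ) →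
      ∃ z w, z ∈ Mstar P ∧ w ∈ Msemi P ∧ y = z + w ∧ deg z ≤ (d : ℝ) - 1 by
    intro y hy
    obtain ⟨n, _, hn2⟩ := deg_nat hd hPm hy
    exact H n y hy hn2
  intro n
  induction n using Nat.strong_induction_on with
  | _ n IH =>
    intro y hy hdeg
    rcases le_or_gt (n : ℕ) (d - 1) with h | h
    · refine ⟨y, 0, hy, (Msemi P).zero_mem, (add_zero y).symm, ?_⟩
      rw [hdeg]
      have h1 : (n : ℝ) ≤ ((d - 1 : ℕ) : ℝ) := by exact_mod_cast h
      have h2 : ((d - 1 : ℕ) : ℝ) = (d : ℝ) - 1 := by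
        push_cast [Nat.cast_sub (le_trans one_le_two hd)]
        ring
      linarith [h1, h2.le]
    · have hge : (d : ℝ) ≤ deg y := by
        rw [hdeg]
        exact_mod_cast Nat.le_of_lt_succ (by omega)
      obtain ⟨p, hpP, hyp, hdeg'⟩ := step_real hd hPm hy hge
      have hn1 : 1 ≤ n := by omega
      have hdeg'' : deg (y - lift p) = ((n - 1 : ℕ) : ℝ) := by
        rw [hdeg', hdeg]
        push_cast [Nat.cast_sub hn1]
        ring
      obtain ⟨z, w, hz, hw, heq, hdz⟩ := IH (n - 1) (by omega) _ hyp hdeg''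
      refine ⟨z, w + lift p, hz, ?_, ?_, hdz⟩
      · exact (Msemi P).add_mem hw (AddSubmonoid.subset_closure ⟨p, hpP.1, hpP.2, rfl⟩)
      · have : y - lift p = z + w := heq
        have h2 : y = (y - lift p) + lift p := by ring
        rw [h2, this, add_assoc]

lemma rdeg_mem (hd : 2 ≤ d) {P : Set (Fin d → ℝ)} (hPm : GoodP d P)
    {y : Fin (d + 1) → ℝ} (hy : y ∈ Mstar P) :
    ∃ n : ℕ, 1 ≤ n ∧ n ≤ d - 1 ∧ rdeg P y = (n : ℝ) := by
  set S := {r : ℝ | ∃ z w, z ∈ Mstar P ∧ w ∈ Msemi P ∧ y = z + w ∧ r = deg z} with hSdef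
  have hrdeg : rdeg P y = sInf S := rfl
  obtain ⟨Ny, hNy1, hNy2⟩ := deg_nat hd hPm hy
  -- every element of S is a positive integer at most deg y
  have hSel : ∀ r ∈ S, ∃ n : ℕ, 1 ≤ n ∧ r = (n : ℝ) ∧ n ≤ Ny := by
    rintro r ⟨z, w, hz, hw, heq, rfl⟩
    obtain ⟨n, hn1, hn2⟩ := deg_nat hd hPm hz
    refine ⟨n, hn1, hn2, ?_⟩
    have hw0 : 0 ≤ w (Fin.last d) := (Msemi_bounds hPm hw).1 (Fin.last d)
    have : deg z ≤ deg y := by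
      have : deg y = deg z + w (Fin.last d) := by
        rw [deg, deg, heq]; rfl
      linarith
    rw [hn2, hNy2] at this
    exact_mod_cast this
  have hne : S.Nonempty := ⟨deg y, y, 0, hy, (Msemi P).zero_mem, (add_zero y).symm, rfl⟩
  have hsub : S ⊆ (fun n : ℕ => (n : ℝ)) '' Set.Icc 1 Ny := by
    intro r hr
    obtain ⟨n, hn1, hn2, hn3⟩ := hSel r hr
    exact ⟨n, ⟨hn1, hn3⟩, hn2.symm⟩
  have hfin : S.Finite := Set.Finite.subset ((Set.finite_Icc 1 Ny).image _) hsub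
  have hmem : sInf S ∈ S := Set.Nonempty.csInf_mem hne hfin
  obtain ⟨n, hn1, hn2, _⟩ := hSel _ hmem
  obtain ⟨z, w, hz, hw, heq, hdz⟩ := reduce hd hPm y hy
  have hzS : deg z ∈ S := ⟨z, w, hz, hw, heq, rfl⟩
  have hle : sInf S ≤ deg z := csInf_le hfin.bddBelow hzS
  have hnd : (n : ℝ) ≤ (d : ℝ) - 1 := by rw [← hn2]; linarith
  have hnd' : n ≤ d - 1 := by
    have : (n : ℝ) + 1 ≤ (d : ℝ) := by linarith
    have h2 : n + 1 ≤ d := by exact_mod_cast this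
    omega
  exact ⟨n, hn1, hnd', by rw [hrdeg, hn2]⟩

lemma witness (hd : 2 ≤ d) {P : Set (Fin d → ℝ)} (hPm : GoodP d P)
    {i : ℕ} (hi1 : 1 ≤ i) (hi2 : i ≤ d - 1) :
    ∃ y ∈ Mstar P, rdeg P y = (i : ℝ) := by
  have hdr : (2 : ℝ) ≤ (d : ℝ) := by exact_mod_cast hd
  have hir : (1 : ℝ) ≤ (i : ℝ) := by exact_mod_cast hi1
  have hid : (i : ℝ) + 1 ≤ (d : ℝ) := by exact_mod_cast (by omega : i + 1 ≤ d)
  set S := univ.filter (fun j : Fin d => (j : ℕ) < d - 1) with hS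
  set sp : Fin d := ⟨d - 1, Nat.sub_lt (by omega) Nat.one_pos⟩ with hsp
  set xw : Fin d → ℝ :=
    fun j => if (j : ℕ) < d - 1 then 1 else ((d : ℝ) + 1) * i - d with hxw
  set yw : Fin (d + 1) → ℝ := Fin.snoc xw (i : ℝ) with hyw
  have hycs : ∀ j : Fin d, yw j.castSucc = xw j := fun j => by
    rw [hyw]; exact Fin.snoc_castSucc _ _ _
  have hyl : yw (Fin.last d) = (i : ℝ) := by rw [hyw]; exact Fin.snoc_last _ _
  have hxS : ∀ j ∈ S, xw j = 1 := by
    intro j hj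
    rw [hxw]
    exact if_pos (Finset.mem_filter.1 hj).2
  have hxsp : xw sp = ((d : ℝ) + 1) * i - d := by
    rw [hxw]; exact if_neg (lt_irrefl _)
  have hcapsp : capR d sp = (d : ℝ) := by
    unfold capR capZ
    rw [if_neg (lt_irrefl _)]
    push_cast
    rfl
  have hcard : ((d - 1 : ℕ) : ℝ) = (d : ℝ) - 1 := by
    push_cast [Nat.cast_sub (le_trans one_le_two hd)]
    ring
  have hcardS : S.card = d - 1 := by rw [hS]; exact card_short hd
  have hsum : ∑ j : Fin d, yw j.castSucc = ((d : ℝ) + 1) * i - 1 := by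
    rw [Finset.sum_congr rfl fun j _ => hycs j, sum_split hd xw, ← hsp,
      Finset.sum_congr rfl hxS, Finset.sum_const, hcardS, hxsp,
      nsmul_eq_mul, mul_one, hcard]
    ring
  -- yw is in Mstar P
  have hywM : yw ∈ Mstar P := by
    rw [mem_Mstar_iff hd hPm]
    constructor
    · intro k
      refine Fin.lastCases ?_ ?_ k
      · exact ⟨(i : ℤ), by rw [hyl]; push_cast; rfl⟩
      · intro j
        rw [hycs j]
        by_cases hj : (j : ℕ) < d - 1
        · exact ⟨1, by simp only [hxw]; rw [if_pos hj]; norm_num⟩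
        · exact ⟨((d : ℤ) + 1) * i - d, by simp only [hxw]; rw [if_neg hj]; push_cast; ring⟩
    · refine ⟨fun j => ?_, ?_⟩
      · rw [hycs j, hyl]
        simp only [hxw]
        by_cases hj : (j : ℕ) < d - 1
        · rw [if_pos hj]
          have : capR d j = 2 := by
            unfold capR capZ; rw [if_pos hj]; norm_num
          rw [this]
          constructor
          · norm_num
          · linarith
        · rw [if_neg hj]
          have : capR d j = (d : ℝ) := by
            unfold capR capZ; rw [if_neg hj]; push_cast; rfl
          rw [this]
          constructor
          · nlinarith
          · nlinarith
      · rw [hsum, hyl]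
        linarith
  refine ⟨yw, hywM, ?_⟩
  -- the decomposition set is exactly {i}
  have hset : {r : ℝ | ∃ z w, z ∈ Mstar P ∧ w ∈ Msemi P ∧ yw = z + w ∧ r = deg z}
      = {(i : ℝ)} := by
    apply Set.Subset.antisymm
    · rintro r ⟨z, w, hz, hw, heq, rfl⟩
      obtain ⟨hzlat, hzopen⟩ := (mem_Mstar_iff hd hPm).1 hz
      obtain ⟨Z, hZ⟩ := latVec hzlat
      obtain ⟨hwpos, hwcap⟩ := Msemi_bounds hPm hw
      have hwe : ∀ k, w k = yw k - z k := by
        intro k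
        have := congrFun heq k
        simp only [Pi.add_apply] at this
        linarith
      -- short coordinates of w vanish
      have hwS : ∀ j ∈ S, w j.castSucc = 0 := by
        intro j hj
        have h1 : 0 < z j.castSucc := (hzopen.1 j).1
        have h2 : 0 ≤ w j.castSucc := hwpos j.castSucc
        have h3 : w j.castSucc = 1 - z j.castSucc := by rw [hwe, hycs, hxS j hj]
        have h4 : (0 : ℝ) < (Z j.castSucc : ℝ) := by rw [← hZ]; exact h1
        have h5 : 1 ≤ Z j.castSucc := by exact_mod_cast h4
        have h6 : (1 : ℝ) ≤ z j.castSucc := by rw [hZ]; exact_mod_cast h5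
        linarith [h3 ▸ h2]
      have hsumw : ∑ j : Fin d, w j.castSucc = w sp.castSucc := by
        rw [sum_split hd (fun j => w j.castSucc), ← hsp, Finset.sum_eq_zero hwS, zero_add]
      have hsumz : ∑ j : Fin d, z j.castSucc
          = ((d : ℝ) + 1) * i - 1 - w sp.castSucc := by
        have : ∑ j : Fin d, yw j.castSucc
            = (∑ j : Fin d, z j.castSucc) + ∑ j : Fin d, w j.castSucc := by
          rw [← Finset.sum_add_distrib]
          exact Finset.sum_congr rfl fun j _ => congrFun heq j.castSucc
        rw [hsum, hsumw] at this
        linarith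
      have hwsp : w sp.castSucc ≤ (d : ℝ) * w (Fin.last d) := by
        have := hwcap sp
        rwa [hcapsp] at this
      have hwlast : w (Fin.last d) = (i : ℝ) - z (Fin.last d) := by
        rw [hwe, hyl]
      have hzsum := hzopen.2
      rw [hsumz] at hzsum
      -- deduce z (last) > i - 1
      have hzl_gt : (i : ℝ) - 1 < z (Fin.last d) := by nlinarith [hwsp, hwlast]
      have hzl_le : z (Fin.last d) ≤ (i : ℝ) := by
        have := hwpos (Fin.last d)
        rw [hwlast] at this
        linarith
      -- integrality forces equality
      have hZl_gt : (i : ℤ) - 1 < Z (Fin.last d) := by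
        have : ((i : ℤ) : ℝ) - 1 < (Z (Fin.last d) : ℝ) := by
          rw [← hZ]; push_cast; exact_mod_cast hzl_gt
        exact_mod_cast (by push_cast at this ⊢; linarith : (((i : ℤ) - 1 : ℤ) : ℝ) < (Z (Fin.last d) : ℝ))
      have hZl_le : Z (Fin.last d) ≤ (i : ℤ) := by
        have : (Z (Fin.last d) : ℝ) ≤ ((i : ℤ) : ℝ) := by rw [← hZ]; push_cast; exact_mod_cast hzl_le
        exact_mod_cast this
      have hZl : Z (Fin.last d) = (i : ℤ) := by omega
      show deg z ∈ {(i : ℝ)}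
      rw [Set.mem_singleton_iff, deg, hZ, hZl]
      push_cast
      rfl
    · intro r hr
      rw [Set.mem_singleton_iff] at hr
      refine ⟨yw, 0, hywM, (Msemi P).zero_mem, (add_zero yw).symm, ?_⟩
      rw [hr, deg, hyl]
  show sInf _ = (i : ℝ)
  rw [hset, csInf_singleton]

end Stmt15

/-- for the polytope `0 ≤ xᵢ ≤ 2` (`i < d`), `0 ≤ x_d ≤ d`,
`x₁ + ⋯ + x_d ≤ d + 1`, the set of reduced degrees of elements of `M*(P)` is
exactly `{1, 2, …, d - 1}`. -/
theorem stmt15 {d : ℕ} (hd : 2 ≤ d) (P : Set (Fin d → ℝ))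
    (hP : P = {x : Fin d → ℝ |
      (∀ i : Fin d, (i : ℕ) < d - 1 → 0 ≤ x i ∧ x i ≤ 2) ∧
      (0 ≤ x ⟨d - 1, by omega⟩ ∧ x ⟨d - 1, by omega⟩ ≤ (d : ℝ)) ∧
      (∑ i, x i) ≤ (d : ℝ) + 1}) :
    {r : ℝ | ∃ y ∈ Mstar P, rdeg P y = r} =
      {r : ℝ | ∃ i : ℕ, 1 ≤ i ∧ i ≤ d - 1 ∧ r = (i : ℝ)} := by
  have hPm : Stmt15.GoodP d P := by
    intro q
    rw [hP]
    simp only [Set.mem_setOf_eq]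
    constructor
    · rintro ⟨h1, h2, h3⟩
      refine ⟨fun j => ?_, h3⟩
      by_cases hj : (j : ℕ) < d - 1
      · have h := h1 j hj
        unfold Stmt15.capR Stmt15.capZ
        rw [if_pos hj]
        refine ⟨h.1, ?_⟩
        push_cast
        exact h.2
      · have hje : j = ⟨d - 1, by omega⟩ := by
          apply Fin.ext
          simp only [Fin.val_mk]
          have := j.isLt
          omega
        unfold Stmt15.capR Stmt15.capZ
        rw [if_neg hj, hje]
        refine ⟨h2.1, ?_⟩
        push_cast
        exact h2.2
    · rintro ⟨h1, h2⟩
      refine ⟨fun j hj => ?_, ?_, h2⟩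
      · have h := h1 j
        unfold Stmt15.capR Stmt15.capZ at h
        rw [if_pos hj] at h
        push_cast at h
        exact h
      · have h := h1 ⟨d - 1, by omega⟩
        unfold Stmt15.capR Stmt15.capZ at h
        rw [if_neg (lt_irrefl _)] at h
        push_cast at h
        exact h
  ext r
  simp only [Set.mem_setOf_eq]
  constructor
  · rintro ⟨y, hy, rfl⟩
    obtain ⟨n, h1, h2, h3⟩ := Stmt15.rdeg_mem hd hPm hy
    exact ⟨n, h1, h2, h3⟩
  · rintro ⟨i, h1, h2, rfl⟩
    exact Stmt15.witness hd hPm h1 h2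
end
end

section
/- Let σ be a lattice simplex of dimension d in ℝ^m with vertices x_0,...,x_d, let 𝒫 ⊇ σ be a lattice polytope of dimension d with 𝒫 ≠ σ, and suppose τ is a facet of σ with (τ \ ∂τ) ∩ ∂𝒫 = ∅, say x_0 ∉ τ. Then (x_1,1) + ··· + (x_d,1) lies in the relative interior of the cone C(𝒫). -/
open Set

noncomputable section

lemma centroid_mem_intrinsicInterior {V : Type*} [NormedAddCommGroup V] [NormedSpace ℝ V]
    [FiniteDimensional ℝ V] {n : ℕ} (hn : 0 < n) (y : Fin n → V)
    (hy : AffineIndependent ℝ y) :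
    Finset.univ.centroid ℝ y ∈ intrinsicInterior ℝ (convexHull ℝ (Set.range y)) := by
  haveI : Nonempty (Fin n) := ⟨⟨0, hn⟩⟩
  set τ : Set V := convexHull ℝ (Set.range y) with hτdef
  set c : V := Finset.univ.centroid ℝ y with hcdef
  have hsum1 : ∑ i : Fin n, (Finset.univ : Finset (Fin n)).centroidWeights ℝ i = 1 :=
    Finset.univ.sum_centroidWeights_eq_one_of_nonempty ℝ Finset.univ_nonempty
  have hcτ : c ∈ τ := by
    rw [hcdef, Finset.centroid_def]
    exact affineCombination_mem_convexHull
      (fun i _ => by simp [Finset.centroidWeights]) hsum1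
  have hspan : affineSpan ℝ τ = affineSpan ℝ (Set.range y) := affineSpan_convexHull _
  haveI : Nonempty (affineSpan ℝ τ) := ⟨⟨c, subset_affineSpan ℝ τ hcτ⟩⟩
  set p' : affineSpan ℝ τ := ⟨c, subset_affineSpan ℝ τ hcτ⟩ with hp'def
  set e : (affineSpan ℝ τ).direction ≃ᵃⁱ[ℝ] (affineSpan ℝ τ) :=
    AffineIsometryEquiv.vaddConst ℝ p' with hedef
  set g : (affineSpan ℝ τ).direction →ᵃ[ℝ] V :=
    (affineSpan ℝ τ).subtype.comp e.toAffineEquiv.toAffineMap with hgdef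
  have hg : ∀ v, g v = ((e v : affineSpan ℝ τ) : V) := fun v => rfl
  have hginj : Function.Injective g := by
    intro a b hab
    rw [hg, hg] at hab
    exact e.injective (Subtype.coe_injective hab)
  have hymem : ∀ i, y i ∈ affineSpan ℝ τ := fun i => by
    rw [hspan]; exact subset_affineSpan ℝ _ (mem_range_self i)
  set z : Fin n → (affineSpan ℝ τ).direction := fun i => e.symm ⟨y i, hymem i⟩ with hzdef
  have hgz : ∀ i, g (z i) = y i := fun i => by
    rw [hg, hzdef]; simp
  have hgzfun : g ∘ z = y := funext hgz
  have hzind : AffineIndependent ℝ z := AffineIndependent.of_comp g (by rw [hgzfun]; exact hy)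
  have hzspan : affineSpan ℝ (Set.range z) = ⊤ := by
    refine eq_top_iff.2 fun v _ => ?_
    have hgv : g v ∈ affineSpan ℝ (Set.range y) := by
      rw [← hspan, hg]; exact (e v).2
    have hmap : (affineSpan ℝ (Set.range z)).map g = affineSpan ℝ (Set.range y) := by
      rw [AffineSubspace.map_span, ← Set.range_comp, hgzfun]
    rw [← hmap] at hgv
    obtain ⟨w, hw, hgw⟩ := hgv
    rwa [← hginj hgw]
  set B : AffineBasis (Fin n) ℝ (affineSpan ℝ τ).direction := ⟨z, hzind, hzspan⟩ with hBdef
  have hBcoe : ⇑B = z := rfl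
  have hint : Finset.univ.centroid ℝ z ∈ interior (convexHull ℝ (Set.range z)) := by
    have := B.centroid_mem_interior_convexHull
    rwa [hBcoe] at this
  have hgc : g (Finset.univ.centroid ℝ z) = c := by
    rw [Finset.centroid_def, Finset.map_affineCombination _ z _ hsum1 g,
      hcdef, Finset.centroid_def]
    rw [hgzfun]
  have hec : e (Finset.univ.centroid ℝ z) = p' := by
    apply Subtype.coe_injective
    have := hgc
    rw [hg] at this
    exact this
  have hpre : (Subtype.val ⁻¹' τ : Set (affineSpan ℝ τ)) = e '' (convexHull ℝ (Set.range z)) := by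
    have himg : Subtype.val '' (e '' (convexHull ℝ (Set.range z))) = τ := by
      rw [← image_comp]
      have : (Subtype.val ∘ (e : (affineSpan ℝ τ).direction → affineSpan ℝ τ)) = ⇑g := rfl
      rw [this, AffineMap.image_convexHull, ← Set.range_comp, hgzfun]
    have h2 := preimage_image_eq (s := ⇑e '' (convexHull ℝ (Set.range z)))
      (Subtype.coe_injective (p := fun x => x ∈ affineSpan ℝ τ))
    rw [himg] at h2
    exact h2
  refine mem_intrinsicInterior.2 ⟨p', ?_, rfl⟩
  rw [hpre, ← AffineIsometryEquiv.coe_toHomeomorph, ← Homeomorph.image_interior]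
  exact ⟨Finset.univ.centroid ℝ z, hint, by
    rw [AffineIsometryEquiv.coe_toHomeomorph]; exact hec⟩

/-- if `σ ⊆ P`, `P ≠ σ`, and the facet `τ = conv{x₁,…,x_d}` of `σ`
satisfies `(τ \\ ∂τ) ∩ ∂P = ∅`, then `(x₁,1) + ⋯ + (x_d,1) ∈ Int C(P)`. -/
theorem stmt17 {m d : ℕ} (hd : 1 ≤ d) (σ P : Set (Fin m → ℝ))
    (x : Fin (d + 1) → (Fin m → ℝ)) (hx : AffineIndependent ℝ x)
    (hxlat : ∀ i, isLat (x i)) (hσ : σ = convexHull ℝ (Set.range x))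
    (V : Set (Fin m → ℝ)) (hV : V.Finite) (hVlat : ∀ p ∈ V, isLat p)
    (hP : P = convexHull ℝ V) (hdim : Module.finrank ℝ (vectorSpan ℝ P) = d)
    (hsub : σ ⊆ P) (hne : P ≠ σ)
    (τ : Set (Fin m → ℝ)) (hτ : τ = convexHull ℝ (Set.range fun j : Fin d => x j.succ))
    (hfacet : Disjoint (τ \ intrinsicFrontier ℝ τ) (intrinsicFrontier ℝ P)) :
    (∑ j : Fin d, lift (x j.succ)) ∈ intrinsicInterior ℝ (coneOf P) := by
  classical
  haveI : Nonempty (Fin d) := ⟨⟨0, hd⟩⟩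
  have hdR : (0:ℝ) < (d:ℝ) := by exact_mod_cast hd
  set y : Fin d → (Fin m → ℝ) := fun j => x j.succ with hydef
  have hyind : AffineIndependent ℝ y :=
    hx.comp_embedding ⟨Fin.succ, Fin.succ_injective d⟩
  set bc : Fin m → ℝ := Finset.univ.centroid ℝ y with hbcdef
  -- bc in intrinsic interior of τ
  have hbτi : bc ∈ intrinsicInterior ℝ τ := by
    rw [hτ]
    exact centroid_mem_intrinsicInterior hd y hyind
  have hbτ : bc ∈ τ := intrinsicInterior_subset hbτi
  have hbnfτ : bc ∉ intrinsicFrontier ℝ τ := by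
    intro h
    rw [← intrinsicClosure_diff_intrinsicInterior] at h
    exact h.2 hbτi
  have hbnP : bc ∉ intrinsicFrontier ℝ P :=
    fun h => Set.disjoint_left.1 hfacet ⟨hbτ, hbnfτ⟩ h
  have hτσ : τ ⊆ σ := by
    rw [hτ, hσ]
    exact convexHull_mono (Set.range_comp_subset_range _ _)
  have hbP : bc ∈ P := hsub (hτσ hbτ)
  have hPcl : IsClosed P := by
    rw [hP]; exact hV.isClosed_convexHull (𝕜 := ℝ)
  have hbPi : bc ∈ intrinsicInterior ℝ P := by
    rw [← closure_diff_intrinsicFrontier]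
    exact ⟨subset_closure hbP, hbnP⟩
  -- extract an open set O around bc
  obtain ⟨z₀, hz₀i, hz₀c⟩ := mem_intrinsicInterior.1 hbPi
  rw [mem_interior_iff_mem_nhds, mem_nhds_induced] at hz₀i
  obtain ⟨u, hu, huP⟩ := hz₀i
  rw [hz₀c] at hu
  set O : Set (Fin m → ℝ) := interior u with hOdef
  have hOopen : IsOpen O := isOpen_interior
  have hbO : bc ∈ O := mem_interior_iff_mem_nhds.2 hu
  have hOP : ∀ q, q ∈ O → q ∈ affineSpan ℝ P → q ∈ P := by
    intro q h1 h2
    have hqu : q ∈ u := interior_subset h1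
    exact huP (show (⟨q, h2⟩ : affineSpan ℝ P) ∈ Subtype.val ⁻¹' u from hqu)
  -- the linear map Φ and the submodule S'
  set Φ : (Fin (m+1) → ℝ) →ₗ[ℝ] (Fin m → ℝ) :=
    LinearMap.funLeft ℝ ℝ Fin.castSucc - LinearMap.smulRight (LinearMap.proj (Fin.last m)) bc
    with hΦdef
  have hΦ : ∀ w : Fin (m+1) → ℝ, Φ w = (fun i => w i.castSucc) - w (Fin.last m) • bc :=
    fun w => rfl
  have hliftc : ∀ p : Fin m → ℝ, (fun i => lift p i.castSucc) = p := by
    intro p; funext i; simp [lift]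
  have hliftl : ∀ p : Fin m → ℝ, lift p (Fin.last m) = 1 := by
    intro p; simp [lift]
  have hcone : ∀ w ∈ coneOf P, Φ w ∈ vectorSpan ℝ P := by
    rintro _ ⟨c, p, hc, hp, rfl⟩
    have : Φ (c • lift p) = c • (p - bc) := by
      rw [map_smul, hΦ]
      congr 1
      rw [hliftc, hliftl, one_smul]
    rw [this]
    exact Submodule.smul_mem _ c (vsub_mem_vectorSpan ℝ hp hbP)
  have hspanle : ∀ w : Fin (m+1) → ℝ, w ∈ affineSpan ℝ (coneOf P) → Φ w ∈ vectorSpan ℝ P := by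
    have hle : affineSpan ℝ (coneOf P) ≤ ((vectorSpan ℝ P).comap Φ).toAffineSubspace :=
      affineSpan_le.2 (fun w hw => hcone w hw)
    intro w hw
    exact hle hw
  -- the open set U
  set U : Set (Fin (m+1) → ℝ) :=
    {w | 0 < w (Fin.last m)} ∩ (fun w : Fin (m+1) → ℝ =>
      (w (Fin.last m))⁻¹ • fun i => w i.castSucc) ⁻¹' O with hUdef
  have hUopen : IsOpen U := by
    apply ContinuousOn.isOpen_inter_preimage _ _ hOopen
    · exact ContinuousOn.smul
        (((continuous_apply (Fin.last m)).continuousOn).inv₀ fun w hw => ne_of_gt hw)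
        (continuous_pi fun i => continuous_apply i.castSucc).continuousOn
    · exact isOpen_lt continuous_const (continuous_apply (Fin.last m))
  -- U ∩ S' ⊆ cone
  have hUS : ∀ w : Fin (m+1) → ℝ, w ∈ U → Φ w ∈ vectorSpan ℝ P → w ∈ coneOf P := by
    rintro w ⟨hc, hqO⟩ hΦw
    set c : ℝ := w (Fin.last m) with hcdef
    set q : Fin m → ℝ := c⁻¹ • fun i => w i.castSucc with hqdef
    have hqb : q - bc = c⁻¹ • Φ w := by
      rw [hΦ, smul_sub, hqdef, smul_smul, inv_mul_cancel₀ (ne_of_gt hc), one_smul]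
    have hqv : q - bc ∈ vectorSpan ℝ P := by
      rw [hqb]; exact Submodule.smul_mem _ _ hΦw
    have hqspan : q ∈ affineSpan ℝ P := by
      have := AffineSubspace.vadd_mem_of_mem_direction
        (by rw [direction_affineSpan]; exact hqv) (subset_affineSpan ℝ P hbP)
      simpa using this
    have hqP : q ∈ P := hOP q hqO hqspan
    refine ⟨c, q, le_of_lt hc, hqP, ?_⟩
    funext i
    refine Fin.lastCases ?_ ?_ i
    · simp [lift, hcdef]
    · intro j
      have : q j = c⁻¹ * w j.castSucc := rfl
      simp [lift, this, hcdef]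
      rw [← mul_assoc, mul_inv_cancel₀ (ne_of_gt (hc : (0:ℝ) < w (Fin.last m))), one_mul]
  -- the point y₀
  set y₀ : Fin (m+1) → ℝ := ∑ j : Fin d, lift (x j.succ) with hy₀def
  have hsum1 : ∑ i : Fin d, (Finset.univ : Finset (Fin d)).centroidWeights ℝ i = 1 :=
    Finset.univ.sum_centroidWeights_eq_one_of_nonempty ℝ Finset.univ_nonempty
  have hbsum : (d:ℝ) • bc = ∑ j : Fin d, y j := by
    rw [hbcdef, Finset.centroid_def, Finset.univ.affineCombination_eq_linear_combination y _ hsum1]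
    rw [Finset.smul_sum]
    congr 1
    funext j
    rw [Finset.centroidWeights_apply, smul_smul]
    simp [mul_inv_cancel₀ (ne_of_gt hdR)]
  have hy₀ : y₀ = (d:ℝ) • lift bc := by
    funext i
    refine Fin.lastCases ?_ ?_ i
    · rw [hy₀def, Finset.sum_apply]
      simp [hliftl, lift]
    · intro j
      rw [hy₀def, Finset.sum_apply]
      have h1 : ∀ k : Fin d, lift (x k.succ) j.castSucc = y k j := by
        intro k; simp [lift, hydef]
      have h2 : ((d:ℝ) • lift bc) j.castSucc = (d:ℝ) * bc j := by simp [lift]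
      rw [h2]
      have h3 : (d:ℝ) * bc j = ((d:ℝ) • bc) j := rfl
      rw [h3, hbsum]
      simp [h1]
  have hy₀cone : y₀ ∈ coneOf P := ⟨d, bc, le_of_lt hdR, hbP, hy₀⟩
  have hy₀U : y₀ ∈ U := by
    constructor
    · show 0 < y₀ (Fin.last m)
      rw [hy₀]
      simpa [lift] using hdR
    · show ((y₀ (Fin.last m))⁻¹ • fun i => y₀ i.castSucc) ∈ O
      have hl : y₀ (Fin.last m) = (d:ℝ) := by rw [hy₀]; simp [lift]
      have hcs : (fun i => y₀ i.castSucc) = (d:ℝ) • bc := by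
        funext i; rw [hy₀]; simp [lift]
      rw [hl, hcs, smul_smul, inv_mul_cancel₀ (ne_of_gt hdR), one_smul]
      exact hbO
  -- conclude
  refine mem_intrinsicInterior.2 ⟨⟨y₀, subset_affineSpan ℝ _ hy₀cone⟩, ?_, rfl⟩
  rw [mem_interior]
  refine ⟨Subtype.val ⁻¹' U, ?_, continuous_subtype_val.isOpen_preimage U hUopen, hy₀U⟩
  rintro ⟨w, hwspan⟩ hwU
  exact hUS w hwU (hspanle w hwspan)
end
end
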